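/- arXiv:0710.5309 — 2 statements merged into one kernel-verified Lean document; each statement's English description precedes it below -/
import Mathlib

section
/- Let Q = [0, π) × [0, π) and Q' = Q ∖ ([0, π/2) × [0, π/2)). There exists a measurable set W₁ ⊆ Q' ∪ (Q + (2π, 2π)) that is 2πℤ²-translation congruent to Q and 2-dilation congruent to Q'. Moreover, for any such W₁, letting W₂, W₃, W₄ be the images of W₁ under the maps (x, y) ↦ (−x, y), (x, y) ↦ (−x, −y), and (x, y) ↦ (x, −y) respectively, the set W₁ ∪ W₂ ∪ W₃ ∪ W₄ is a wavelet set in ℝ² for the dilation matrix 2I (this construction recovers the 'four corners set'). -/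
open MeasureTheory Set
open scoped Real symmDiff

noncomputable section

/-- An a.e. (modulo Lebesgue-null sets) partition of the set `A ⊆ ℝ²` by the family `P`. -/
def IsAEPartition2 {ι : Type*} (P : ι → Set (ℝ × ℝ)) (A : Set (ℝ × ℝ)) : Prop :=
  volume (A ∆ (⋃ i, P i)) = 0 ∧ ∀ i j : ι, i ≠ j → volume (P i ∩ P j) = 0

/-- `A ⊆ ℝ²` is `2πℤ²`-translation congruent to `B`. -/
def TransCongruent2 (A B : Set (ℝ × ℝ)) : Prop :=
  ∃ P : ℤ × ℤ → Set (ℝ × ℝ), (∀ m, MeasurableSet (P m)) ∧ IsAEPartition2 P A ∧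
    IsAEPartition2
      (fun (m : ℤ × ℤ) =>
        (fun p : ℝ × ℝ => (p.1 + 2 * Real.pi * (m.1 : ℝ), p.2 + 2 * Real.pi * (m.2 : ℝ)))
          '' P m) B

/-- `A ⊆ ℝ²` is `2`-dilation congruent to `B`. -/
def DilCongruent2 (A B : Set (ℝ × ℝ)) : Prop :=
  ∃ P : ℤ → Set (ℝ × ℝ), (∀ k, MeasurableSet (P k)) ∧ IsAEPartition2 P A ∧
    IsAEPartition2
      (fun (k : ℤ) =>
        (fun p : ℝ × ℝ => ((2 : ℝ) ^ k * p.1, (2 : ℝ) ^ k * p.2)) '' P k) B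

/-- `W ⊆ ℝ²` is a wavelet set for the dilation matrix `2I`: its `2πℤ²`-translates and
its `2ℤ`-dilates each partition `ℝ²` modulo Lebesgue-null sets. -/
def IsWaveletSet2 (W : Set (ℝ × ℝ)) : Prop :=
  MeasurableSet W ∧
  (∀ᵐ p : ℝ × ℝ ∂volume, ∃! m : ℤ × ℤ,
    (p.1 + 2 * Real.pi * (m.1 : ℝ), p.2 + 2 * Real.pi * (m.2 : ℝ)) ∈ W) ∧
  (∀ᵐ p : ℝ × ℝ ∂volume, ∃! k : ℤ, ((2 : ℝ) ^ k * p.1, (2 : ℝ) ^ k * p.2) ∈ W)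

lemma notmem_symmDiff_iff {α : Type*} {s t : Set α} {a : α} (h : a ∉ s ∆ t) :
    a ∈ s ↔ a ∈ t := by
  rw [Set.mem_symmDiff] at h; push_neg at h; tauto

lemma euPair {α β : Type*} (R : α → β → Prop) (h : ∀ a b b', R a b → R a b' → b = b') :
    (∃! a, ∃ b, R a b) ↔ (∃! q : α × β, R q.1 q.2) := by
  constructor
  · rintro ⟨a, ⟨b, hb⟩, ha⟩
    refine ⟨(a, b), hb, ?_⟩
    rintro ⟨a', b'⟩ hb'
    have ha' : a' = a := ha a' ⟨b', hb'⟩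
    subst ha'
    exact Prod.ext rfl (h a' b' b hb' hb)
  · rintro ⟨⟨a, b⟩, hb, hu⟩
    refine ⟨a, ⟨b, hb⟩, ?_⟩
    rintro a' ⟨b', hb'⟩
    exact congrArg Prod.fst (hu (a', b') hb')

lemma transfer {ι : Type*} [AddGroup ι] [Countable ι] (g : ι → ℝ × ℝ → ℝ × ℝ)
    (hqm : ∀ i, Measure.QuasiMeasurePreserving (g i) volume volume)
    (h0 : ∀ p, g 0 p = p)
    (hcomp : ∀ i j p, g i (g j p) = g (i + j) p)
    (P : ι → Set (ℝ × ℝ)) {A B : Set (ℝ × ℝ)}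
    (hPA : IsAEPartition2 P A) (hPB : IsAEPartition2 (fun i => g i '' P i) B) :
    ∀ᵐ p : ℝ × ℝ, ((∃! j, g j p ∈ A) ↔ (∃! j, g j p ∈ B)) := by
  classical
  set E : Set (ℝ × ℝ) :=
    (A ∆ (⋃ i, P i)) ∪ (⋃ q : {q : ι × ι // q.1 ≠ q.2}, P q.1.1 ∩ P q.1.2) ∪
    ((B ∆ (⋃ i, g i '' P i)) ∪
      ⋃ q : {q : ι × ι // q.1 ≠ q.2}, (g q.1.1 '' P q.1.1) ∩ (g q.1.2 '' P q.1.2)) with hE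
  have hEnull : volume E = 0 := by
    refine measure_union_null (measure_union_null hPA.1 ?_) (measure_union_null hPB.1 ?_)
    · exact measure_iUnion_null fun q => hPA.2 q.1.1 q.1.2 q.2
    · exact measure_iUnion_null fun q => hPB.2 q.1.1 q.1.2 q.2
  have hae : ∀ᵐ p : ℝ × ℝ, ∀ j : ι, g j p ∉ E := by
    rw [ae_all_iff]
    intro j
    exact (hqm j).ae (measure_eq_zero_iff_ae_notMem.mp hEnull)
  filter_upwards [hae] with p hp
  have hp' : ∀ j, g j p ∉ (A ∆ (⋃ i, P i)) ∧
      g j p ∉ (⋃ q : {q : ι × ι // q.1 ≠ q.2}, P q.1.1 ∩ P q.1.2) ∧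
      g j p ∉ (B ∆ (⋃ i, g i '' P i)) ∧
      g j p ∉ (⋃ q : {q : ι × ι // q.1 ≠ q.2}, (g q.1.1 '' P q.1.1) ∩ (g q.1.2 '' P q.1.2)) := by
    intro j
    have := hp j
    simp only [hE, mem_union, not_or] at this
    exact ⟨this.1.1, this.1.2, this.2.1, this.2.2⟩
  have f1 : ∀ j, g j p ∈ A ↔ ∃ i, g j p ∈ P i := by
    intro j
    rw [notmem_symmDiff_iff (hp' j).1, mem_iUnion]
  have f2 : ∀ j (i i' : ι), g j p ∈ P i → g j p ∈ P i' → i = i' := by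
    intro j i i' hi hi'
    by_contra hne
    exact (hp' j).2.1 (mem_iUnion.mpr ⟨⟨(i, i'), hne⟩, ⟨hi, hi'⟩⟩)
  have f3 : ∀ j, g j p ∈ B ↔ ∃ i, g j p ∈ g i '' P i := by
    intro j
    rw [notmem_symmDiff_iff (hp' j).2.2.1, mem_iUnion]
  have f4 : ∀ j (i i' : ι), g j p ∈ g i '' P i → g j p ∈ g i' '' P i' → i = i' := by
    intro j i i' hi hi'
    by_contra hne
    exact (hp' j).2.2.2 (mem_iUnion.mpr ⟨⟨(i, i'), hne⟩, ⟨hi, hi'⟩⟩)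
  have f5 : ∀ (i j : ι), g j p ∈ g i '' P i ↔ g (-i + j) p ∈ P i := by
    intro i j
    constructor
    · rintro ⟨q, hq, he⟩
      have : q = g (-i + j) p := by
        have := congrArg (g (-i)) he
        rw [hcomp, hcomp, neg_add_cancel, h0] at this
        exact this
      rwa [← this]
    · intro h
      exact ⟨g (-i + j) p, h, by rw [hcomp, add_neg_cancel_left]⟩
  -- now the chain
  have LHS : (∃! j, g j p ∈ A) ↔ ∃! q : ι × ι, g q.1 p ∈ P q.2 := by
    rw [existsUnique_congr f1]
    exact euPair (fun j i => g j p ∈ P i) f2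
  have RHS : (∃! j, g j p ∈ B) ↔ ∃! q : ι × ι, g (-q.2 + q.1) p ∈ P q.2 := by
    rw [existsUnique_congr f3]
    rw [euPair (fun j i => g j p ∈ g i '' P i) f4]
    exact existsUnique_congr (fun q => f5 q.2 q.1)
  rw [LHS, RHS]
  let e : ι × ι ≃ ι × ι :=
    { toFun := fun q => (q.2 + q.1, q.2)
      invFun := fun q => (-q.2 + q.1, q.2)
      left_inv := by rintro ⟨a, b⟩; simp
      right_inv := by rintro ⟨a, b⟩; simp }
  calc (∃! q : ι × ι, g q.1 p ∈ P q.2)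
      ↔ ∃! q : ι × ι, g (e.symm q).1 p ∈ P (e.symm q).2 := e.existsUnique_congr_left
    _ ↔ ∃! q : ι × ι, g (-q.2 + q.1) p ∈ P q.2 := Iff.rfl

noncomputable section

/-- translation action -/
def tau (m : ℤ × ℤ) (p : ℝ × ℝ) : ℝ × ℝ :=
  (p.1 + 2 * Real.pi * (m.1 : ℝ), p.2 + 2 * Real.pi * (m.2 : ℝ))

/-- dilation action -/
def dil (k : ℤ) (p : ℝ × ℝ) : ℝ × ℝ := ((2 : ℝ) ^ k * p.1, (2 : ℝ) ^ k * p.2)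

lemma tau_qmp (m : ℤ × ℤ) : Measure.QuasiMeasurePreserving (tau m) volume volume := by
  have h : tau m = fun p : ℝ × ℝ => p + ((2 * Real.pi * (m.1 : ℝ)), (2 * Real.pi * (m.2 : ℝ))) := by
    funext p; simp [tau, Prod.ext_iff]
  rw [h]
  exact (measurePreserving_add_right volume _).quasiMeasurePreserving

lemma tau_zero (p : ℝ × ℝ) : tau 0 p = p := by simp [tau]

lemma tau_comp (m m' : ℤ × ℤ) (p : ℝ × ℝ) : tau m (tau m' p) = tau (m + m') p := by
  simp only [tau, Prod.fst_add, Prod.snd_add]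
  push_cast
  exact Prod.ext (by ring) (by ring)

lemma dil_qmp (k : ℤ) : Measure.QuasiMeasurePreserving (dil k) volume volume := by
  have h : dil k = fun p : ℝ × ℝ => ((2 : ℝ) ^ k) • p := by
    funext p; simp [dil, Prod.smul_def, smul_eq_mul]
  rw [h]
  exact Measure.quasiMeasurePreserving_smul volume (by positivity)

lemma dil_zero (p : ℝ × ℝ) : dil 0 p = p := by simp [dil]

lemma dil_comp (k k' : ℤ) (p : ℝ × ℝ) : dil k (dil k' p) = dil (k + k') p := by
  simp only [dil]
  rw [← mul_assoc, ← zpow_add₀ (two_ne_zero)]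
  exact Prod.ext rfl (by rw [← mul_assoc, ← zpow_add₀ (two_ne_zero)])

/-- 1-D translation tiling characterization -/
lemma oneD_trans (x : ℝ) :
    (∃! n : ℤ, x + 2 * Real.pi * (n : ℝ) ∈ Ico (0 : ℝ) Real.pi) ↔
      Int.fract (x / (2 * Real.pi)) < 1 / 2 := by
  have h2π : (0 : ℝ) < 2 * Real.pi := by positivity
  have key : ∀ n : ℤ, (x + 2 * Real.pi * n ∈ Ico (0 : ℝ) Real.pi) ↔
      (x / (2 * Real.pi) + n ∈ Ico (0 : ℝ) (1 / 2)) := by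
    intro n
    have he : x / (2 * Real.pi) + n = (x + 2 * Real.pi * n) / (2 * Real.pi) := by
      field_simp
    simp only [mem_Ico, he]
    constructor
    · rintro ⟨h1, h2⟩
      exact ⟨by positivity, by rw [div_lt_iff₀ h2π]; linarith⟩
    · rintro ⟨h1, h2⟩
      rw [le_div_iff₀ h2π] at h1
      rw [div_lt_iff₀ h2π] at h2
      exact ⟨by linarith, by linarith⟩
  simp only [key]
  set t := x / (2 * Real.pi) with ht
  constructor
  · rintro ⟨n, hn, -⟩
    have : Int.fract (t + n) = t + n := Int.fract_eq_self.mpr ⟨hn.1, by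
      have := hn.2; norm_num at this ⊢; linarith⟩
    rw [Int.fract_add_intCast] at this
    rw [this]; exact hn.2
  · intro h
    refine ⟨-⌊t⌋, ?_, ?_⟩
    · have heq : t + ((-⌊t⌋ : ℤ) : ℝ) = Int.fract t := by
        rw [Int.fract]; push_cast; ring
      have : t + ((-⌊t⌋ : ℤ) : ℝ) ∈ Ico (0:ℝ) (1/2) := by
        rw [heq]; exact ⟨Int.fract_nonneg t, h⟩
      exact this
    · intro n' hn'
      have hmem : t + ((-⌊t⌋ : ℤ) : ℝ) = Int.fract t := by
        rw [Int.fract]; push_cast; ring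
      have h1 : (0:ℝ) ≤ t + n' := hn'.1
      have h2 : t + (n' : ℝ) < 1/2 := hn'.2
      have h3 : (0:ℝ) ≤ Int.fract t := Int.fract_nonneg t
      have h4 : Int.fract t < 1/2 := h
      rw [← hmem] at h3 h4
      have hlt : ((n' : ℝ)) - ((-⌊t⌋ : ℤ) : ℝ) < 1 := by push_cast at *; linarith
      have hgt : ((-⌊t⌋ : ℤ) : ℝ) - ((n' : ℝ)) < 1 := by push_cast at *; linarith
      have : n' - (-⌊t⌋) < 1 := by exact_mod_cast hlt
      have : -⌊t⌋ - n' < 1 := by exact_mod_cast hgt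
      omega

/-- ∃! on products of independent conditions -/
lemma euProd {α β : Type*} {C₁ : α → Prop} {C₂ : β → Prop} :
    (∃! m : α × β, C₁ m.1 ∧ C₂ m.2) ↔ (∃! n, C₁ n) ∧ (∃! n, C₂ n) := by
  constructor
  · rintro ⟨⟨a, b⟩, ⟨h1, h2⟩, hu⟩
    exact ⟨⟨a, h1, fun a' h' => congrArg Prod.fst (hu (a', b) ⟨h', h2⟩)⟩,
      ⟨b, h2, fun b' h' => congrArg Prod.snd (hu (a, b') ⟨h1, h'⟩)⟩⟩
  · rintro ⟨⟨a, ha, hau⟩, ⟨b, hb, hbu⟩⟩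
    refine ⟨(a, b), ⟨ha, hb⟩, ?_⟩
    rintro ⟨a', b'⟩ ⟨h1, h2⟩
    exact Prod.ext (hau a' h1) (hbu b' h2)

/-- region for translation tiling -/
def Rgn : Set (ℝ × ℝ) :=
  {p : ℝ × ℝ | Int.fract (p.1 / (2 * Real.pi)) < 1 / 2 ∧ Int.fract (p.2 / (2 * Real.pi)) < 1 / 2}

lemma pointQ (p : ℝ × ℝ) :
    (∃! m : ℤ × ℤ, tau m p ∈ Ico (0:ℝ) Real.pi ×ˢ Ico (0:ℝ) Real.pi) ↔ p ∈ Rgn := by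
  have : ∀ m : ℤ × ℤ, (tau m p ∈ Ico (0:ℝ) Real.pi ×ˢ Ico (0:ℝ) Real.pi) ↔
      ((p.1 + 2 * Real.pi * (m.1:ℝ) ∈ Ico (0:ℝ) Real.pi) ∧
       (p.2 + 2 * Real.pi * (m.2:ℝ) ∈ Ico (0:ℝ) Real.pi)) := fun m => Iff.rfl
  rw [existsUnique_congr this]
  exact (euProd (C₁ := fun n : ℤ => p.1 + 2 * Real.pi * (n:ℝ) ∈ Ico (0:ℝ) Real.pi)
    (C₂ := fun n : ℤ => p.2 + 2 * Real.pi * (n:ℝ) ∈ Ico (0:ℝ) Real.pi)).trans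
    (by rw [oneD_trans, oneD_trans]; exact Iff.rfl)

/-- membership in Q' via max -/
lemma memQ' (p : ℝ × ℝ) :
    p ∈ (Ico (0:ℝ) Real.pi ×ˢ Ico (0:ℝ) Real.pi \
      Ico (0:ℝ) (Real.pi/2) ×ˢ Ico (0:ℝ) (Real.pi/2)) ↔
    (0 ≤ p.1 ∧ 0 ≤ p.2 ∧ Real.pi/2 ≤ max p.1 p.2 ∧ max p.1 p.2 < Real.pi) := by
  simp only [mem_diff, mem_prod, mem_Ico]
  constructor
  · rintro ⟨⟨⟨h1, h2⟩, ⟨h3, h4⟩⟩, h5⟩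
    refine ⟨h1, h3, ?_, max_lt h2 h4⟩
    by_contra hc
    push_neg at hc
    rw [max_lt_iff] at hc
    exact h5 ⟨⟨h1, hc.1⟩, ⟨h3, hc.2⟩⟩
  · rintro ⟨h1, h2, h3, h4⟩
    rw [max_lt_iff] at h4
    refine ⟨⟨⟨h1, h4.1⟩, ⟨h2, h4.2⟩⟩, ?_⟩
    rintro ⟨⟨-, hu⟩, ⟨-, hv⟩⟩
    rw [le_max_iff] at h3
    rcases h3 with h | h <;> linarith

lemma oneD_dil {M : ℝ} (hM : 0 < M) :
    ∃! k : ℤ, (2:ℝ) ^ k * M ∈ Ico (Real.pi/2) Real.pi := by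
  have hπ : (0:ℝ) < Real.pi := Real.pi_pos
  obtain ⟨n, hn1, hn2⟩ := exists_mem_Ico_zpow (x := M / Real.pi) (y := 2) (by positivity) one_lt_two
  have hp2 : (0:ℝ) < (2:ℝ) ^ (n+1) := by positivity
  have hkey : (2:ℝ) ^ (-n-1) = ((2:ℝ) ^ (n+1))⁻¹ := by
    rw [← zpow_neg]; congr 1; ring
  refine ⟨-n-1, ⟨?_, ?_⟩, ?_⟩
  · -- π/2 ≤ 2^(-n-1) * M
    rw [hkey, inv_mul_eq_div, le_div_iff₀ hp2]
    have h2 : (2:ℝ) ^ (n+1) = 2 * (2:ℝ) ^ n := by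
      rw [zpow_add₀ (two_ne_zero : (2:ℝ) ≠ 0)]; ring
    rw [h2]
    rw [le_div_iff₀ hπ] at hn1
    nlinarith [hn1]
  · -- 2^(-n-1) * M < π
    rw [hkey, inv_mul_eq_div, div_lt_iff₀ hp2]
    rw [div_lt_iff₀ hπ] at hn2
    nlinarith [hn2]
  · intro k hk
    -- uniqueness: any two solutions agree
    have huniq : ∀ k k' : ℤ, (2:ℝ)^k * M ∈ Ico (Real.pi/2) Real.pi →
        (2:ℝ)^k' * M ∈ Ico (Real.pi/2) Real.pi → k ≤ k' := by
      intro k k' h h'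
      by_contra hc
      push_neg at hc
      have hk1 : k' + 1 ≤ k := hc
      have : (2:ℝ) ^ (k'+1) ≤ (2:ℝ) ^ k := zpow_le_zpow_right₀ one_le_two hk1
      have h2 : (2:ℝ) ^ (k'+1) = 2 * (2:ℝ) ^ k' := by
        rw [zpow_add₀ (two_ne_zero : (2:ℝ) ≠ 0)]; ring
      have hlt := h.2
      have hge := h'.1
      nlinarith [hM, this, h2]
    have hab : ∀ k k' : ℤ, (2:ℝ)^k * M ∈ Ico (Real.pi/2) Real.pi →
        (2:ℝ)^k' * M ∈ Ico (Real.pi/2) Real.pi → k = k' := fun a b ha hb =>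
      le_antisymm (huniq a b ha hb) (huniq b a hb ha)
    refine hab k (-n-1) hk ⟨?_, ?_⟩
    · rw [hkey, inv_mul_eq_div, le_div_iff₀ hp2]
      have h2 : (2:ℝ) ^ (n+1) = 2 * (2:ℝ) ^ n := by
        rw [zpow_add₀ (two_ne_zero : (2:ℝ) ≠ 0)]; ring
      rw [h2]
      rw [le_div_iff₀ hπ] at hn1
      nlinarith [hn1]
    · rw [hkey, inv_mul_eq_div, div_lt_iff₀ hp2]
      rw [div_lt_iff₀ hπ] at hn2
      nlinarith [hn2]

lemma pointQ' {p : ℝ × ℝ} (h1 : 0 < p.1) (h2 : 0 < p.2) :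
    ∃! k : ℤ, dil k p ∈ (Ico (0:ℝ) Real.pi ×ˢ Ico (0:ℝ) Real.pi \
      Ico (0:ℝ) (Real.pi/2) ×ˢ Ico (0:ℝ) (Real.pi/2)) := by
  have hM : 0 < max p.1 p.2 := lt_max_of_lt_left h1
  have hchar : ∀ k : ℤ, dil k p ∈ (Ico (0:ℝ) Real.pi ×ˢ Ico (0:ℝ) Real.pi \
      Ico (0:ℝ) (Real.pi/2) ×ˢ Ico (0:ℝ) (Real.pi/2)) ↔
      (2:ℝ) ^ k * max p.1 p.2 ∈ Ico (Real.pi/2) Real.pi := by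
    intro k
    rw [memQ']
    have hpow : (0:ℝ) < (2:ℝ)^k := by positivity
    have hmax : max ((2:ℝ)^k * p.1) ((2:ℝ)^k * p.2) = (2:ℝ)^k * max p.1 p.2 :=
      (mul_max_of_nonneg _ _ hpow.le).symm
    simp only [dil, mem_Ico]
    constructor
    · rintro ⟨-, -, h3, h4⟩
      rw [hmax] at h3 h4
      exact ⟨h3, h4⟩
    · rintro ⟨h3, h4⟩
      exact ⟨by positivity, by positivity, by rw [hmax]; exact h3, by rw [hmax]; exact h4⟩
  rw [existsUnique_congr hchar]
  exact oneD_dil hM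

lemma Rgn_tau (m : ℤ × ℤ) (p : ℝ × ℝ) : tau m p ∈ Rgn ↔ p ∈ Rgn := by
  have hπ : Real.pi ≠ 0 := Real.pi_ne_zero
  have e1 : (p.1 + 2 * Real.pi * (m.1:ℝ)) / (2 * Real.pi) = p.1 / (2 * Real.pi) + (m.1:ℝ) := by
    field_simp
  have e2 : (p.2 + 2 * Real.pi * (m.2:ℝ)) / (2 * Real.pi) = p.2 / (2 * Real.pi) + (m.2:ℝ) := by
    field_simp
  simp only [Rgn, tau, mem_setOf_eq, e1, e2, Int.fract_add_intCast]

lemma fract_lt_half_of {x : ℝ} (h0 : 0 ≤ x) (h1 : x < Real.pi) :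
    Int.fract (x / (2 * Real.pi)) < 1 / 2 := by
  have hπ : (0:ℝ) < Real.pi := Real.pi_pos
  have hx : x / (2 * Real.pi) < 1/2 := by rw [div_lt_iff₀ (by positivity)]; linarith
  have : Int.fract (x / (2 * Real.pi)) = x / (2 * Real.pi) :=
    Int.fract_eq_self.mpr ⟨by positivity, by linarith⟩
  rw [this]; exact hx

/-- reflections -/
def sx (p : ℝ × ℝ) : ℝ × ℝ := (-p.1, p.2)
def sy (p : ℝ × ℝ) : ℝ × ℝ := (p.1, -p.2)
def sxy (p : ℝ × ℝ) : ℝ × ℝ := (-p.1, -p.2)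

lemma sx_mp : MeasurePreserving sx volume volume := by
  have h := (Measure.measurePreserving_neg (volume : Measure ℝ)).prod
    (MeasurePreserving.id (volume : Measure ℝ))
  rw [← Measure.volume_eq_prod] at h
  exact h
lemma sy_mp : MeasurePreserving sy volume volume := by
  have h := (MeasurePreserving.id (volume : Measure ℝ)).prod
    (Measure.measurePreserving_neg (volume : Measure ℝ))
  rw [← Measure.volume_eq_prod] at h
  exact h
lemma sxy_mp : MeasurePreserving sxy volume volume := by
  have h := (Measure.measurePreserving_neg (volume : Measure ℝ)).prod
    (Measure.measurePreserving_neg (volume : Measure ℝ))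
  rw [← Measure.volume_eq_prod] at h
  exact h

lemma sx_invol : Function.Involutive sx := fun p => by simp [sx]
lemma sy_invol : Function.Involutive sy := fun p => by simp [sy]
lemma sxy_invol : Function.Involutive sxy := fun p => by simp [sxy]

/-- the bad null set -/
def Bad : Set (ℝ × ℝ) :=
  {p : ℝ × ℝ | (∃ n : ℤ, p.1 = Real.pi * n) ∨ (∃ n : ℤ, p.2 = Real.pi * n)}

lemma bad_null : volume Bad = 0 := by
  have hsub : Bad ⊆ (⋃ n : ℤ, ({Real.pi * (n:ℝ)} : Set ℝ) ×ˢ (univ : Set ℝ)) ∪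
      (⋃ n : ℤ, (univ : Set ℝ) ×ˢ ({Real.pi * (n:ℝ)} : Set ℝ)) := by
    rintro p (⟨n, hn⟩ | ⟨n, hn⟩)
    · exact Or.inl (mem_iUnion.mpr ⟨n, Set.mem_prod.mpr ⟨hn, trivial⟩⟩)
    · exact Or.inr (mem_iUnion.mpr ⟨n, Set.mem_prod.mpr ⟨trivial, hn⟩⟩)
  refine measure_mono_null hsub (measure_union_null ?_ ?_) <;>
    refine measure_iUnion_null fun n => ?_ <;>
    rw [Measure.volume_eq_prod, Measure.prod_prod] <;> simp

/-! ### Part 1: explicit construction -/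

def aa (n : ℕ) : ℝ := 2 * Real.pi / 3 - (2 * Real.pi / 3) / 4 ^ n

lemma aa_zero : aa 0 = 0 := by simp [aa]

lemma aa_one : aa 1 = Real.pi / 2 := by
  simp only [aa, pow_one]; ring

lemma aa_nonneg (n : ℕ) : 0 ≤ aa n := by
  have hπ := Real.pi_pos
  have h1 : (1:ℝ) ≤ 4 ^ n := one_le_pow₀ (by norm_num : (1:ℝ) ≤ 4)
  have h4 : (0:ℝ) < 4 ^ n := by positivity
  rw [aa, sub_nonneg, div_le_iff₀ h4]
  nlinarith

lemma aa_lt (n : ℕ) : aa n < 2 * Real.pi / 3 := by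
  have hπ := Real.pi_pos
  have h4 : (0:ℝ) < 4 ^ n := by positivity
  have : (0:ℝ) < (2 * Real.pi / 3) / 4 ^ n := by positivity
  rw [aa]; linarith

lemma aa_lt_pi (n : ℕ) : aa n < Real.pi := by
  have hπ := Real.pi_pos
  have := aa_lt n
  linarith

lemma aa_mono : StrictMono aa := by
  have hπ := Real.pi_pos
  apply strictMono_nat_of_lt_succ
  intro n
  have h4 : (0:ℝ) < 4 ^ n := by positivity
  rw [aa, aa, sub_lt_sub_iff_left, pow_succ, div_lt_div_iff₀ (by positivity) h4]
  nlinarith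

lemma aa_rec (n : ℕ) : (aa n + 2 * Real.pi) / 4 = aa (n + 1) := by
  have h4 : (4:ℝ) ^ n ≠ 0 := by positivity
  rw [aa, aa, pow_succ]
  field_simp
  ring

def Qset : Set (ℝ × ℝ) := Ico (0:ℝ) Real.pi ×ˢ Ico (0:ℝ) Real.pi

def Bn (n : ℕ) : Set (ℝ × ℝ) := Ico (aa n) (aa (n+1)) ×ˢ Ico (aa n) (aa (n+1))

def Tst : Set (ℝ × ℝ) := ⋃ n, Bn n

def TstV : Set (ℝ × ℝ) :=
  ⋃ n, Ico (aa n + 2 * Real.pi) (aa (n+1) + 2 * Real.pi) ×ˢ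
    Ico (aa n + 2 * Real.pi) (aa (n+1) + 2 * Real.pi)

def Sst : Set (ℝ × ℝ) := Qset \ Tst

lemma Bn_meas (n : ℕ) : MeasurableSet (Bn n) := (measurableSet_Ico).prod measurableSet_Ico
lemma Tst_meas : MeasurableSet Tst := MeasurableSet.iUnion Bn_meas
lemma TstV_meas : MeasurableSet TstV :=
  MeasurableSet.iUnion fun n => (measurableSet_Ico).prod measurableSet_Ico
lemma Qset_meas : MeasurableSet Qset := (measurableSet_Ico).prod measurableSet_Ico
lemma Sst_meas : MeasurableSet Sst := Qset_meas.diff Tst_meas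

lemma Bn_subset_Q (n : ℕ) : Bn n ⊆ Qset := by
  rintro ⟨x, y⟩ ⟨⟨h1, h2⟩, ⟨h3, h4⟩⟩
  have h5 := aa_nonneg n
  have h6 := aa_lt_pi (n+1)
  exact ⟨⟨by linarith, by linarith⟩, ⟨by linarith, by linarith⟩⟩

lemma Tst_subset_Q : Tst ⊆ Qset := iUnion_subset Bn_subset_Q

lemma Ico_aa_disj {n m : ℕ} (h : n ≠ m) :
    Ico (aa n) (aa (n+1)) ∩ Ico (aa m) (aa (m+1)) = ∅ := by
  rcases h.lt_or_gt with h | h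
  · have : aa (n+1) ≤ aa m := aa_mono.monotone h
    ext x
    simp only [mem_inter_iff, mem_Ico, mem_empty_iff_false, iff_false]
    rintro ⟨⟨-, h2⟩, ⟨h3, -⟩⟩
    linarith
  · have : aa (m+1) ≤ aa n := aa_mono.monotone h
    ext x
    simp only [mem_inter_iff, mem_Ico, mem_empty_iff_false, iff_false]
    rintro ⟨⟨h1, -⟩, ⟨-, h4⟩⟩
    linarith

lemma Bn_disj {n m : ℕ} (h : n ≠ m) : Bn n ∩ Bn m = ∅ := by
  ext ⟨x, y⟩
  simp only [Bn, mem_inter_iff, mem_prod, mem_empty_iff_false, iff_false]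
  rintro ⟨⟨hx1, -⟩, ⟨hx2, -⟩⟩
  have := Ico_aa_disj h
  exact absurd (mem_inter hx1 hx2) (by rw [this]; exact notMem_empty _)

lemma Sst_inter_Tst : Sst ∩ Tst = ∅ := diff_inter_self

lemma Sst_union_Tst : Sst ∪ Tst = Qset := diff_union_of_subset Tst_subset_Q

lemma Sst_inter_TstV : Sst ∩ TstV = ∅ := by
  ext ⟨x, y⟩
  simp only [Sst, Qset, mem_inter_iff, mem_diff, mem_prod, mem_Ico, mem_empty_iff_false, iff_false]
  rintro ⟨⟨⟨⟨-, h2⟩, -⟩, -⟩, hv⟩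
  rw [TstV, mem_iUnion] at hv
  obtain ⟨n, hv⟩ := hv
  rw [mem_prod, mem_Ico, mem_Ico] at hv
  have := aa_nonneg n
  have hπ := Real.pi_pos
  linarith [hv.1.1]

lemma image_affine_Ico' {c : ℝ} (hc : 0 < c) (d l u : ℝ) :
    (fun x : ℝ => c * x + d) '' Ico l u = Ico (c*l+d) (c*u+d) := by
  ext x
  simp only [mem_image, mem_Ico]
  constructor
  · rintro ⟨y, ⟨hy1, hy2⟩, rfl⟩
    constructor <;> nlinarith
  · rintro ⟨h1, h2⟩
    refine ⟨(x - d) / c, ⟨?_, ?_⟩, by field_simp; ring⟩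
    · rw [le_div_iff₀ hc]; nlinarith
    · rw [div_lt_iff₀ hc]; nlinarith

lemma image_prod_affine {c : ℝ} (hc : 0 < c) (d l u l' u' : ℝ) :
    (fun p : ℝ × ℝ => (c * p.1 + d, c * p.2 + d)) '' (Ico l u ×ˢ Ico l' u') =
      Ico (c*l+d) (c*u+d) ×ˢ Ico (c*l'+d) (c*u'+d) := by
  rw [← image_affine_Ico' hc d l u, ← image_affine_Ico' hc d l' u', prod_image_image_eq]

/-- the translation partition for `W₁ = Sst ∪ TstV` -/
def Ptr : ℤ × ℤ → Set (ℝ × ℝ) := fun m =>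
  if m = (0, 0) then Sst else if m = (-1, -1) then TstV else ∅

lemma Ptr_union : ⋃ m, Ptr m = Sst ∪ TstV := by
  apply Subset.antisymm
  · refine iUnion_subset fun m => ?_
    unfold Ptr
    split_ifs
    · exact subset_union_left
    · exact subset_union_right
    · exact empty_subset _
  · refine union_subset ?_ ?_
    · exact subset_iUnion_of_subset (0, 0) (by simp [Ptr])
    · exact subset_iUnion_of_subset (-1, -1) (by norm_num [Ptr])

lemma Ptr_pairwise (i j : ℤ × ℤ) (h : i ≠ j) : volume (Ptr i ∩ Ptr j) = 0 := by
  unfold Ptr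
  split_ifs with h1 h2 h3 h4 h5 <;>
    simp_all [Sst_inter_TstV, inter_comm, measure_empty] <;>
    first
      | (rw [inter_comm, Sst_inter_TstV]; simp)
      | (rw [Sst_inter_TstV]; simp)

lemma image_tau_zero (S : Set (ℝ × ℝ)) :
    (fun p : ℝ × ℝ => (p.1 + 2 * Real.pi * (((0,0) : ℤ × ℤ).1 : ℝ),
      p.2 + 2 * Real.pi * (((0,0) : ℤ × ℤ).2 : ℝ))) '' S = S := by
  have h : (fun p : ℝ × ℝ => (p.1 + 2 * Real.pi * (((0,0) : ℤ × ℤ).1 : ℝ),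
      p.2 + 2 * Real.pi * (((0,0) : ℤ × ℤ).2 : ℝ))) = id := by
    funext p; simp
  rw [h, image_id]

lemma image_tau_neg_TstV :
    (fun p : ℝ × ℝ => (p.1 + 2 * Real.pi * ((((-1,-1)) : ℤ × ℤ).1 : ℝ),
      p.2 + 2 * Real.pi * ((((-1,-1)) : ℤ × ℤ).2 : ℝ))) '' TstV = Tst := by
  have h : (fun p : ℝ × ℝ => (p.1 + 2 * Real.pi * ((((-1,-1)) : ℤ × ℤ).1 : ℝ),
      p.2 + 2 * Real.pi * ((((-1,-1)) : ℤ × ℤ).2 : ℝ))) =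
      fun p : ℝ × ℝ => (1 * p.1 + (-(2*Real.pi)), 1 * p.2 + (-(2*Real.pi))) := by
    funext p; norm_num
  rw [h, TstV, image_iUnion]
  unfold Tst Bn
  refine iUnion_congr fun n => ?_
  rw [image_prod_affine one_pos]
  have e1 : (1:ℝ) * (aa n + 2 * Real.pi) + -(2 * Real.pi) = aa n := by ring
  have e2 : (1:ℝ) * (aa (n+1) + 2 * Real.pi) + -(2 * Real.pi) = aa (n+1) := by ring
  rw [e1, e2]

lemma dil_neg2_eq : ((2:ℝ) ^ (-2 : ℤ)) = 1/4 := by norm_num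

lemma image_dil_zero (S : Set (ℝ × ℝ)) :
    (fun p : ℝ × ℝ => ((2:ℝ) ^ (0:ℤ) * p.1, (2:ℝ) ^ (0:ℤ) * p.2)) '' S = S := by
  have h : (fun p : ℝ × ℝ => ((2:ℝ) ^ (0:ℤ) * p.1, (2:ℝ) ^ (0:ℤ) * p.2)) = id := by
    funext p; norm_num
  rw [h, image_id]

lemma image_dil_neg2_TstV :
    (fun p : ℝ × ℝ => ((2:ℝ) ^ (-2:ℤ) * p.1, (2:ℝ) ^ (-2:ℤ) * p.2)) '' TstV =
      ⋃ n, Bn (n+1) := by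
  have h : (fun p : ℝ × ℝ => ((2:ℝ) ^ (-2:ℤ) * p.1, (2:ℝ) ^ (-2:ℤ) * p.2)) =
      fun p : ℝ × ℝ => ((1/4) * p.1 + 0, (1/4) * p.2 + 0) := by
    funext p; rw [dil_neg2_eq]; norm_num
  rw [h, TstV, image_iUnion]
  refine iUnion_congr fun n => ?_
  rw [image_prod_affine (by norm_num : (0:ℝ) < 1/4)]
  have e1 : (1/4 : ℝ) * (aa n + 2 * Real.pi) + 0 = aa (n+1) := by
    rw [← aa_rec n]; ring
  have e2 : (1/4 : ℝ) * (aa (n+1) + 2 * Real.pi) + 0 = aa (n+2) := by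
    rw [← aa_rec (n+1)]; ring
  rw [e1, e2]
  rfl

lemma union_Bn_succ : Sst ∪ (⋃ n, Bn (n+1)) = Qset \ Bn 0 := by
  apply Subset.antisymm
  · refine union_subset ?_ ?_
    · intro p hp
      exact ⟨hp.1, fun hB => hp.2 (mem_iUnion.mpr ⟨0, hB⟩)⟩
    · refine iUnion_subset fun n => ?_
      intro p hp
      refine ⟨Bn_subset_Q _ hp, fun hB => ?_⟩
      have := Bn_disj (Nat.succ_ne_zero n)
      exact absurd (mem_inter hp hB) (by rw [this]; exact notMem_empty _)
  · rintro p ⟨hQ, hB0⟩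
    by_cases hT : p ∈ Tst
    · obtain ⟨n, hn⟩ := mem_iUnion.mp hT
      right
      rcases n with _ | m
      · exact absurd hn hB0
      · exact mem_iUnion.mpr ⟨m, hn⟩
    · exact Or.inl ⟨hQ, hT⟩

lemma Sst_inter_Bn_succ : Sst ∩ (⋃ n, Bn (n+1)) = ∅ := by
  have h : (⋃ n, Bn (n+1)) ⊆ Tst := iUnion_subset fun n => subset_iUnion Bn (n+1)
  rw [← subset_empty_iff]
  intro p hp
  rw [← Sst_inter_Tst]
  exact ⟨hp.1, h hp.2⟩

lemma Bn0_eq : Bn 0 = Ico (0:ℝ) (Real.pi/2) ×ˢ Ico (0:ℝ) (Real.pi/2) := by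
  unfold Bn
  rw [show aa 0 = 0 from aa_zero, show aa (0+1) = Real.pi/2 from aa_one]

lemma QsetdiffBn0 : Qset \ Bn 0 =
    Ico (0:ℝ) Real.pi ×ˢ Ico (0:ℝ) Real.pi \ Ico (0:ℝ) (Real.pi/2) ×ˢ Ico (0:ℝ) (Real.pi/2) := by
  rw [Bn0_eq]; rfl

lemma part1_trans : TransCongruent2 (Sst ∪ TstV) Qset := by
  refine ⟨Ptr, ?_, ⟨?_, Ptr_pairwise⟩, ⟨?_, ?_⟩⟩
  · intro m
    unfold Ptr
    split_ifs
    exacts [Sst_meas, TstV_meas, MeasurableSet.empty]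
  · rw [Ptr_union, symmDiff_self]
    simp
  · have hU : (⋃ m : ℤ × ℤ, (fun p : ℝ × ℝ =>
        (p.1 + 2 * Real.pi * (m.1 : ℝ), p.2 + 2 * Real.pi * (m.2 : ℝ))) '' Ptr m) = Qset := by
      apply Subset.antisymm
      · refine iUnion_subset fun m => ?_
        unfold Ptr
        split_ifs with h1 h2
        · subst h1; rw [image_tau_zero]
          rw [← Sst_union_Tst]; exact subset_union_left
        · subst h2; rw [image_tau_neg_TstV]
          rw [← Sst_union_Tst]; exact subset_union_right
        · rw [image_empty]; exact empty_subset _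
      · rw [← Sst_union_Tst]
        refine union_subset ?_ ?_
        · refine subset_iUnion_of_subset (0, 0) ?_
          rw [show Ptr (0,0) = Sst from if_pos rfl, image_tau_zero]
        · refine subset_iUnion_of_subset (-1, -1) ?_
          rw [show Ptr (-1,-1) = TstV by norm_num [Ptr], image_tau_neg_TstV]
    rw [hU, symmDiff_self]
    simp
  · intro i j hij
    unfold Ptr
    beta_reduce
    split_ifs
    all_goals try subst_vars
    all_goals
      first
        | exact absurd rfl hij
        | (rw [image_empty, inter_empty]; simp)
        | (rw [image_empty, empty_inter]; simp)
        | (rw [image_tau_zero, image_tau_neg_TstV, Sst_inter_Tst]; simp)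
        | (rw [image_tau_neg_TstV, image_tau_zero, inter_comm, Sst_inter_Tst]; simp)

def Pdl : ℤ → Set (ℝ × ℝ) := fun k =>
  if k = 0 then Sst else if k = -2 then TstV else ∅

lemma Pdl_union : ⋃ k, Pdl k = Sst ∪ TstV := by
  apply Subset.antisymm
  · refine iUnion_subset fun k => ?_
    unfold Pdl
    split_ifs
    · exact subset_union_left
    · exact subset_union_right
    · exact empty_subset _
  · refine union_subset ?_ ?_
    · exact subset_iUnion_of_subset 0 (by simp [Pdl])
    · exact subset_iUnion_of_subset (-2) (by norm_num [Pdl])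

lemma Pdl_pairwise (i j : ℤ) (h : i ≠ j) : volume (Pdl i ∩ Pdl j) = 0 := by
  unfold Pdl
  split_ifs with h1 h2 h3 h4 h5 <;>
    first
      | (exact absurd (h1.trans h2.symm) h)
      | (exact absurd (h2.trans h5.symm) h)
      | (rw [inter_comm, Sst_inter_TstV]; simp)
      | (rw [Sst_inter_TstV]; simp)
      | (rw [inter_empty]; simp)
      | (rw [empty_inter]; simp)
      | simp_all

lemma part1_dil : DilCongruent2 (Sst ∪ TstV)
    (Ico (0:ℝ) Real.pi ×ˢ Ico (0:ℝ) Real.pi \ Ico (0:ℝ) (Real.pi/2) ×ˢ Ico (0:ℝ) (Real.pi/2)) := by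
  refine ⟨Pdl, ?_, ⟨?_, Pdl_pairwise⟩, ⟨?_, ?_⟩⟩
  · intro k
    unfold Pdl
    split_ifs
    exacts [Sst_meas, TstV_meas, MeasurableSet.empty]
  · rw [Pdl_union, symmDiff_self]
    simp
  · have hU : (⋃ k : ℤ, (fun p : ℝ × ℝ =>
        ((2:ℝ) ^ k * p.1, (2:ℝ) ^ k * p.2)) '' Pdl k) = Qset \ Bn 0 := by
      apply Subset.antisymm
      · refine iUnion_subset fun k => ?_
        unfold Pdl
        split_ifs with h1 h2
        · subst h1; rw [image_dil_zero]
          rw [← union_Bn_succ]; exact subset_union_left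
        · subst h2; rw [image_dil_neg2_TstV]
          rw [← union_Bn_succ]; exact subset_union_right
        · rw [image_empty]; exact empty_subset _
      · rw [← union_Bn_succ]
        refine union_subset ?_ ?_
        · refine subset_iUnion_of_subset 0 ?_
          rw [show Pdl 0 = Sst from if_pos rfl, image_dil_zero]
        · refine subset_iUnion_of_subset (-2) ?_
          rw [show Pdl (-2) = TstV by norm_num [Pdl], image_dil_neg2_TstV]
    rw [hU, QsetdiffBn0, symmDiff_self]
    simp
  · intro i j hij
    unfold Pdl
    beta_reduce
    split_ifs
    all_goals try subst_vars
    all_goals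
      first
        | exact absurd rfl hij
        | (rw [image_empty, inter_empty]; simp)
        | (rw [image_empty, empty_inter]; simp)
        | (rw [image_dil_zero, image_dil_neg2_TstV, Sst_inter_Bn_succ]; simp)
        | (rw [image_dil_neg2_TstV, image_dil_zero, inter_comm, Sst_inter_Bn_succ]; simp)

lemma part1_subset : (Sst ∪ TstV) ⊆
    (Ico (0:ℝ) Real.pi ×ˢ Ico (0:ℝ) Real.pi \ Ico (0:ℝ) (Real.pi/2) ×ˢ Ico (0:ℝ) (Real.pi/2)) ∪
      ((fun p : ℝ × ℝ => (p.1 + 2 * Real.pi, p.2 + 2 * Real.pi)) ''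
        (Ico (0:ℝ) Real.pi ×ˢ Ico (0:ℝ) Real.pi)) := by
  refine union_subset ?_ ?_
  · intro p hp
    left
    rw [← QsetdiffBn0]
    exact ⟨hp.1, fun hB => hp.2 (mem_iUnion.mpr ⟨0, hB⟩)⟩
  · intro p hp
    right
    rw [TstV, mem_iUnion] at hp
    obtain ⟨n, hn⟩ := hp
    rw [mem_prod, mem_Ico, mem_Ico] at hn
    refine ⟨(p.1 - 2 * Real.pi, p.2 - 2 * Real.pi), ?_, by simp⟩
    have h1 := Bn_subset_Q n (show (p.1 - 2*Real.pi, p.2 - 2*Real.pi) ∈ Bn n from ?_)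
    · exact h1
    · rw [Bn, mem_prod, mem_Ico, mem_Ico]
      dsimp only
      constructor
      · constructor <;> linarith [hn.1.1, hn.1.2]
      · constructor <;> linarith [hn.2.1, hn.2.2]

/-! ### Part 2 infrastructure -/

lemma mem_invol_image {f : ℝ × ℝ → ℝ × ℝ} (hf : Function.Involutive f)
    (S : Set (ℝ × ℝ)) (q : ℝ × ℝ) : q ∈ f '' S ↔ f q ∈ S := by
  constructor
  · rintro ⟨r, hr, rfl⟩
    rwa [hf r]
  · intro h
    exact ⟨f q, h, hf q⟩

lemma invol_image_eq_preimage {f : ℝ × ℝ → ℝ × ℝ} (hf : Function.Involutive f)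
    (S : Set (ℝ × ℝ)) : f '' S = f ⁻¹' S := by
  ext q; rw [mem_invol_image hf, mem_preimage]

def exEq : ℤ × ℤ ≃ ℤ × ℤ :=
  ⟨fun m => (-m.1, m.2), fun m => (-m.1, m.2), fun m => by simp, fun m => by simp⟩
def eyEq : ℤ × ℤ ≃ ℤ × ℤ :=
  ⟨fun m => (m.1, -m.2), fun m => (m.1, -m.2), fun m => by simp, fun m => by simp⟩
def exyEq : ℤ × ℤ ≃ ℤ × ℤ :=
  ⟨fun m => (-m.1, -m.2), fun m => (-m.1, -m.2), fun m => by simp, fun m => by simp⟩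

lemma tau_sx (m : ℤ × ℤ) (p : ℝ × ℝ) : sx (tau m p) = tau (exEq m) (sx p) := by
  simp only [sx, tau, exEq, Equiv.coe_fn_mk]
  push_cast
  exact Prod.ext (by ring) (by ring)

lemma tau_sy (m : ℤ × ℤ) (p : ℝ × ℝ) : sy (tau m p) = tau (eyEq m) (sy p) := by
  simp only [sy, tau, eyEq, Equiv.coe_fn_mk]
  push_cast
  exact Prod.ext (by ring) (by ring)

lemma tau_sxy (m : ℤ × ℤ) (p : ℝ × ℝ) : sxy (tau m p) = tau (exyEq m) (sxy p) := by
  simp only [sxy, tau, exyEq, Equiv.coe_fn_mk]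
  push_cast
  exact Prod.ext (by ring) (by ring)

lemma dil_sx (k : ℤ) (p : ℝ × ℝ) : sx (dil k p) = dil k (sx p) := by
  simp only [sx, dil]
  exact Prod.ext (by ring) (by ring)
lemma dil_sy (k : ℤ) (p : ℝ × ℝ) : sy (dil k p) = dil k (sy p) := by
  simp only [sy, dil]
  exact Prod.ext (by ring) (by ring)
lemma dil_sxy (k : ℤ) (p : ℝ × ℝ) : sxy (dil k p) = dil k (sxy p) := by
  simp only [sxy, dil]
  exact Prod.ext (by ring) (by ring)

lemma eu_reindex {α : Type*} (e : α ≃ α) (P : α → Prop) :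
    (∃! a, P (e a)) ↔ (∃! a, P a) := by
  constructor
  · rintro ⟨a, ha, hu⟩
    refine ⟨e a, ha, fun b hb => ?_⟩
    have := hu (e.symm b) (show P (e (e.symm b)) by rwa [e.apply_symm_apply])
    calc b = e (e.symm b) := (e.apply_symm_apply b).symm
    _ = e a := by rw [this]
  · rintro ⟨a, ha, hu⟩
    refine ⟨e.symm a, show P (e (e.symm a)) by rwa [e.apply_symm_apply], fun b hb => ?_⟩
    have := hu (e b) hb
    calc b = e.symm (e b) := (e.symm_apply_apply b).symm
    _ = e.symm a := by rw [this]

lemma combineEU {ι κ : Type*} (T : κ → ι → Prop) (r : κ → Prop)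
    (h1 : ∀ i, r i → (∃! m, T i m)) (h2 : ∀ i m, T i m → r i) (h3 : ∃! i, r i) :
    ∃! m, ∃ i, T i m := by
  obtain ⟨i₀, hr, hru⟩ := h3
  obtain ⟨m₀, hm₀, hu₀⟩ := h1 i₀ hr
  refine ⟨m₀, ⟨i₀, hm₀⟩, ?_⟩
  rintro m' ⟨i', hT'⟩
  have : i' = i₀ := hru i' (h2 i' m' hT')
  subst this
  exact hu₀ m' hT'

lemma eu_fin4 {c1 c2 : Prop} [Decidable c1] [Decidable c2] :
    ∃! i : Fin 4, (![c1 ∧ c2, ¬c1 ∧ c2, ¬c1 ∧ ¬c2, c1 ∧ ¬c2] i) := by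
  by_cases h1 : c1 <;> by_cases h2 : c2
  · exact ⟨0, ⟨h1, h2⟩, by intro i hi; fin_cases i <;> simp_all⟩
  · exact ⟨3, ⟨h1, h2⟩, by intro i hi; fin_cases i <;> simp_all⟩
  · exact ⟨1, ⟨h1, h2⟩, by intro i hi; fin_cases i <;> simp_all⟩
  · exact ⟨2, ⟨h1, h2⟩, by intro i hi; fin_cases i <;> simp_all⟩

lemma fract_neg_lt_half {x : ℝ} (hx : ∀ n : ℤ, x ≠ Real.pi * n) :
    (Int.fract (-x / (2 * Real.pi)) < 1/2 ↔ ¬(Int.fract (x / (2 * Real.pi)) < 1/2)) := by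
  have hπ : (0:ℝ) < Real.pi := Real.pi_pos
  set t := x / (2 * Real.pi) with ht
  have hxt : x = t * (2 * Real.pi) := by rw [ht]; field_simp
  have h0 : Int.fract t ≠ 0 := by
    intro h
    have h2 : t = (⌊t⌋ : ℝ) := by rw [Int.fract] at h; linarith
    obtain ⟨n, hn⟩ : ∃ n : ℤ, t = (n : ℝ) := ⟨⌊t⌋, h2⟩
    exact hx (2 * n) (by rw [hxt, hn]; push_cast; ring)
  have hhalf : Int.fract t ≠ 1/2 := by
    intro h
    have h2 : t = (⌊t⌋ : ℝ) + 1/2 := by rw [Int.fract] at h; linarith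
    obtain ⟨n, hn⟩ : ∃ n : ℤ, t = (n : ℝ) + 1/2 := ⟨⌊t⌋, h2⟩
    exact hx (2 * n + 1) (by rw [hxt, hn]; push_cast; ring)
  have hneg : -x / (2 * Real.pi) = -t := by rw [ht]; ring
  rw [hneg, Int.fract_neg h0]
  have hlt1 : Int.fract t < 1 := Int.fract_lt_one t
  constructor
  · intro h hc
    linarith
  · intro h
    push_neg at h
    rcases lt_or_eq_of_le h with h' | h'
    · linarith
    · exact absurd h'.symm hhalf

def Qp : Set (ℝ × ℝ) :=
  Ico (0:ℝ) Real.pi ×ˢ Ico (0:ℝ) Real.pi \ Ico (0:ℝ) (Real.pi/2) ×ˢ Ico (0:ℝ) (Real.pi/2)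

def imgQ : Set (ℝ × ℝ) :=
  (fun p : ℝ × ℝ => (p.1 + 2 * Real.pi, p.2 + 2 * Real.pi)) '' (Ico (0:ℝ) Real.pi ×ˢ Ico (0:ℝ) Real.pi)

lemma fract_shift_lt_half {x : ℝ} (h0 : 0 ≤ x) (h1 : x < Real.pi) :
    Int.fract ((x + 2 * Real.pi) / (2 * Real.pi)) < 1/2 := by
  have hπ : (0:ℝ) < Real.pi := Real.pi_pos
  have he : (x + 2 * Real.pi) / (2 * Real.pi) = x / (2 * Real.pi) + ((1:ℤ):ℝ) := by
    push_cast; field_simp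
  rw [he, Int.fract_add_intCast]
  exact fract_lt_half_of h0 h1

lemma W_sub_Rgn {W₁ : Set (ℝ × ℝ)} (hsub : W₁ ⊆ Qp ∪ imgQ) : W₁ ⊆ Rgn := by
  intro p hp
  rcases hsub hp with h | h
  · obtain ⟨⟨⟨h1, h2⟩, ⟨h3, h4⟩⟩, -⟩ := h
    exact ⟨fract_lt_half_of h1 h2, fract_lt_half_of h3 h4⟩
  · obtain ⟨q, ⟨⟨h1, h2⟩, ⟨h3, h4⟩⟩, rfl⟩ := h
    exact ⟨fract_shift_lt_half h1 h2, fract_shift_lt_half h3 h4⟩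

lemma W_sub_Pos {W₁ : Set (ℝ × ℝ)} (hsub : W₁ ⊆ Qp ∪ imgQ) :
    W₁ ⊆ {p : ℝ × ℝ | 0 ≤ p.1 ∧ 0 ≤ p.2} := by
  intro p hp
  have hπ : (0:ℝ) < Real.pi := Real.pi_pos
  rcases hsub hp with h | h
  · obtain ⟨⟨⟨h1, -⟩, ⟨h3, -⟩⟩, -⟩ := h
    exact ⟨h1, h3⟩
  · obtain ⟨q, ⟨⟨h1, -⟩, ⟨h3, -⟩⟩, rfl⟩ := h
    exact ⟨by simp; linarith, by simp; linarith⟩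

lemma hW_trans_ae {W₁ : Set (ℝ × ℝ)} (hTC : TransCongruent2 W₁ Qset) :
    ∀ᵐ p : ℝ × ℝ, ((∃! m : ℤ × ℤ, tau m p ∈ W₁) ↔ p ∈ Rgn) := by
  obtain ⟨P, hPm, hPA, hPB⟩ := hTC
  have h := transfer tau tau_qmp tau_zero tau_comp P hPA hPB
  filter_upwards [h] with p hp
  rw [hp]
  exact pointQ p

lemma hW_dil_ae {W₁ : Set (ℝ × ℝ)} (hDC : DilCongruent2 W₁ Qp) :
    ∀ᵐ p : ℝ × ℝ, ((∃! k : ℤ, dil k p ∈ W₁) ↔ (∃! k : ℤ, dil k p ∈ Qp)) := by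
  obtain ⟨P, hPm, hPA, hPB⟩ := hDC
  exact transfer dil dil_qmp dil_zero dil_comp P hPA hPB

lemma part2_trans {W₁ : Set (ℝ × ℝ)} (hsub : W₁ ⊆ Qp ∪ imgQ)
    (hTC : TransCongruent2 W₁ Qset) :
    ∀ᵐ p : ℝ × ℝ, ∃! m : ℤ × ℤ,
      tau m p ∈ (W₁ ∪ sx '' W₁ ∪ sxy '' W₁ ∪ sy '' W₁) := by
  classical
  have h0 := hW_trans_ae hTC
  have h1 := sx_mp.quasiMeasurePreserving.ae h0
  have h2 := sxy_mp.quasiMeasurePreserving.ae h0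
  have h3 := sy_mp.quasiMeasurePreserving.ae h0
  have hbad : ∀ᵐ p : ℝ × ℝ, p ∉ Bad := measure_eq_zero_iff_ae_notMem.mp bad_null
  filter_upwards [h0, h1, h2, h3, hbad] with p k0 k1 k2 k3 hb
  simp only [Bad, mem_setOf_eq, not_or, not_exists] at hb
  obtain ⟨hx, hy⟩ := hb
  set a := Int.fract (p.1 / (2 * Real.pi)) < 1/2 with ha
  set b := Int.fract (p.2 / (2 * Real.pi)) < 1/2 with hbdef
  -- region characterizations of reflected points
  have rsx : sx p ∈ Rgn ↔ (¬a ∧ b) := by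
    simp only [Rgn, sx, mem_setOf_eq]
    rw [fract_neg_lt_half hx]
  have rsy : sy p ∈ Rgn ↔ (a ∧ ¬b) := by
    simp only [Rgn, sy, mem_setOf_eq]
    rw [fract_neg_lt_half hy]
  have rsxy : sxy p ∈ Rgn ↔ (¬a ∧ ¬b) := by
    simp only [Rgn, sxy, mem_setOf_eq]
    rw [fract_neg_lt_half hx, fract_neg_lt_half hy]
  -- membership translations
  have e1 : ∀ m, (tau m p ∈ sx '' W₁) ↔ tau (exEq m) (sx p) ∈ W₁ := fun m => by
    rw [mem_invol_image sx_invol, tau_sx]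
  have e2 : ∀ m, (tau m p ∈ sxy '' W₁) ↔ tau (exyEq m) (sxy p) ∈ W₁ := fun m => by
    rw [mem_invol_image sxy_invol, tau_sxy]
  have e3 : ∀ m, (tau m p ∈ sy '' W₁) ↔ tau (eyEq m) (sy p) ∈ W₁ := fun m => by
    rw [mem_invol_image sy_invol, tau_sy]
  have eu1 : (∃! m, tau m p ∈ sx '' W₁) ↔ sx p ∈ Rgn := by
    rw [existsUnique_congr e1, eu_reindex exEq (fun m => tau m (sx p) ∈ W₁)]
    exact k1
  have eu2 : (∃! m, tau m p ∈ sxy '' W₁) ↔ sxy p ∈ Rgn := by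
    rw [existsUnique_congr e2, eu_reindex exyEq (fun m => tau m (sxy p) ∈ W₁)]
    exact k2
  have eu3 : (∃! m, tau m p ∈ sy '' W₁) ↔ sy p ∈ Rgn := by
    rw [existsUnique_congr e3, eu_reindex eyEq (fun m => tau m (sy p) ∈ W₁)]
    exact k3
  -- combined via Fin 4
  set V : Fin 4 → Set (ℝ × ℝ) := ![W₁, sx '' W₁, sxy '' W₁, sy '' W₁] with hV
  set r : Fin 4 → Prop := ![a ∧ b, ¬a ∧ b, ¬a ∧ ¬b, a ∧ ¬b] with hr
  have hcomb : ∃! m : ℤ × ℤ, ∃ i : Fin 4, tau m p ∈ V i := by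
    refine combineEU (fun i m => tau m p ∈ V i) r ?_ ?_ ?_
    · intro i
      fin_cases i <;> simp only [hV, hr, Matrix.cons_val_zero, Matrix.cons_val_one,
        Matrix.head_cons, Matrix.cons_val_two, Matrix.tail_cons, Matrix.cons_val_three]
      · intro h; exact k0.mpr h
      · intro h; exact eu1.mpr (rsx.mpr h)
      · intro h; exact eu2.mpr (rsxy.mpr h)
      · intro h; exact eu3.mpr (rsy.mpr h)
    · intro i m
      fin_cases i <;> simp only [hV, hr, Matrix.cons_val_zero, Matrix.cons_val_one,
        Matrix.head_cons, Matrix.cons_val_two, Matrix.tail_cons, Matrix.cons_val_three]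
      · intro h
        exact (Rgn_tau m p).mp (W_sub_Rgn hsub h)
      · intro h
        exact rsx.mp ((Rgn_tau (exEq m) (sx p)).mp (W_sub_Rgn hsub ((e1 m).mp h)))
      · intro h
        exact rsxy.mp ((Rgn_tau (exyEq m) (sxy p)).mp (W_sub_Rgn hsub ((e2 m).mp h)))
      · intro h
        exact rsy.mp ((Rgn_tau (eyEq m) (sy p)).mp (W_sub_Rgn hsub ((e3 m).mp h)))
    · exact eu_fin4
  have hmem : ∀ m : ℤ × ℤ, (tau m p ∈ (W₁ ∪ sx '' W₁ ∪ sxy '' W₁ ∪ sy '' W₁)) ↔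
      ∃ i : Fin 4, tau m p ∈ V i := by
    intro m
    constructor
    · rintro (((h | h) | h) | h)
      exacts [⟨0, h⟩, ⟨1, h⟩, ⟨2, h⟩, ⟨3, h⟩]
    · rintro ⟨i, hi⟩
      fin_cases i <;> simp only [hV, Matrix.cons_val_zero, Matrix.cons_val_one,
        Matrix.head_cons, Matrix.cons_val_two, Matrix.tail_cons, Matrix.cons_val_three] at hi
      · exact Or.inl (Or.inl (Or.inl hi))
      · exact Or.inl (Or.inl (Or.inr hi))
      · exact Or.inl (Or.inr hi)
      · exact Or.inr hi
  rw [existsUnique_congr hmem]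
  exact hcomb

lemma nonneg_of_dil {k : ℤ} {x : ℝ} (h : 0 ≤ (2:ℝ)^k * x) : 0 ≤ x := by
  have hk : (0:ℝ) < (2:ℝ)^k := by positivity
  nlinarith [mul_pos hk hk]

lemma part2_dil {W₁ : Set (ℝ × ℝ)} (hsub : W₁ ⊆ Qp ∪ imgQ)
    (hDC : DilCongruent2 W₁ Qp) :
    ∀ᵐ p : ℝ × ℝ, ∃! k : ℤ,
      dil k p ∈ (W₁ ∪ sx '' W₁ ∪ sxy '' W₁ ∪ sy '' W₁) := by
  classical
  have h0 := hW_dil_ae hDC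
  have h1 := sx_mp.quasiMeasurePreserving.ae h0
  have h2 := sxy_mp.quasiMeasurePreserving.ae h0
  have h3 := sy_mp.quasiMeasurePreserving.ae h0
  have hbad : ∀ᵐ p : ℝ × ℝ, p ∉ Bad := measure_eq_zero_iff_ae_notMem.mp bad_null
  filter_upwards [h0, h1, h2, h3, hbad] with p k0 k1 k2 k3 hb
  simp only [Bad, mem_setOf_eq, not_or, not_exists] at hb
  obtain ⟨hx, hy⟩ := hb
  have hne1 : p.1 ≠ 0 := by have := hx 0; simpa using this
  have hne2 : p.2 ≠ 0 := by have := hy 0; simpa using this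
  set c1 := 0 < p.1 with hc1
  set c2 := 0 < p.2 with hc2
  -- membership translations
  have e1 : ∀ k, (dil k p ∈ sx '' W₁) ↔ dil k (sx p) ∈ W₁ := fun k => by
    rw [mem_invol_image sx_invol, dil_sx]
  have e2 : ∀ k, (dil k p ∈ sxy '' W₁) ↔ dil k (sxy p) ∈ W₁ := fun k => by
    rw [mem_invol_image sxy_invol, dil_sxy]
  have e3 : ∀ k, (dil k p ∈ sy '' W₁) ↔ dil k (sy p) ∈ W₁ := fun k => by
    rw [mem_invol_image sy_invol, dil_sy]
  set V : Fin 4 → Set (ℝ × ℝ) := ![W₁, sx '' W₁, sxy '' W₁, sy '' W₁] with hV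
  set r : Fin 4 → Prop := ![c1 ∧ c2, ¬c1 ∧ c2, ¬c1 ∧ ¬c2, c1 ∧ ¬c2] with hr
  have hcomb : ∃! k : ℤ, ∃ i : Fin 4, dil k p ∈ V i := by
    refine combineEU (fun i k => dil k p ∈ V i) r ?_ ?_ ?_
    · intro i
      fin_cases i <;> simp only [hV, hr, Matrix.cons_val_zero, Matrix.cons_val_one,
        Matrix.head_cons, Matrix.cons_val_two, Matrix.tail_cons, Matrix.cons_val_three]
      · rintro ⟨hp1, hp2⟩
        exact k0.mpr (pointQ' hp1 hp2)
      · rintro ⟨hp1, hp2⟩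
        have ha' : (0:ℝ) < -p.1 := by
          have : p.1 < 0 := lt_of_le_of_ne (not_lt.mp hp1) hne1
          linarith
        exact (existsUnique_congr e1).mpr (k1.mpr (pointQ' ha' hp2))
      · rintro ⟨hp1, hp2⟩
        have ha' : (0:ℝ) < -p.1 := by
          have : p.1 < 0 := lt_of_le_of_ne (not_lt.mp hp1) hne1
          linarith
        have hb' : (0:ℝ) < -p.2 := by
          have : p.2 < 0 := lt_of_le_of_ne (not_lt.mp hp2) hne2
          linarith
        exact (existsUnique_congr e2).mpr (k2.mpr (pointQ' ha' hb'))
      · rintro ⟨hp1, hp2⟩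
        have hb' : (0:ℝ) < -p.2 := by
          have : p.2 < 0 := lt_of_le_of_ne (not_lt.mp hp2) hne2
          linarith
        exact (existsUnique_congr e3).mpr (k3.mpr (pointQ' hp1 hb'))
    · intro i k
      fin_cases i <;> simp only [hV, hr, Matrix.cons_val_zero, Matrix.cons_val_one,
        Matrix.head_cons, Matrix.cons_val_two, Matrix.tail_cons, Matrix.cons_val_three]
      · intro h
        have hpos := W_sub_Pos hsub h
        exact ⟨lt_of_le_of_ne (nonneg_of_dil hpos.1) (Ne.symm hne1),
          lt_of_le_of_ne (nonneg_of_dil hpos.2) (Ne.symm hne2)⟩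
      · intro h
        have hpos := W_sub_Pos hsub ((e1 k).mp h)
        have ha : (0:ℝ) ≤ -p.1 := nonneg_of_dil hpos.1
        have hb' : (0:ℝ) ≤ p.2 := nonneg_of_dil hpos.2
        exact ⟨not_lt.mpr (by linarith), lt_of_le_of_ne hb' (Ne.symm hne2)⟩
      · intro h
        have hpos := W_sub_Pos hsub ((e2 k).mp h)
        have ha : (0:ℝ) ≤ -p.1 := nonneg_of_dil hpos.1
        have hb' : (0:ℝ) ≤ -p.2 := nonneg_of_dil hpos.2
        exact ⟨not_lt.mpr (by linarith), not_lt.mpr (by linarith)⟩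
      · intro h
        have hpos := W_sub_Pos hsub ((e3 k).mp h)
        have ha : (0:ℝ) ≤ p.1 := nonneg_of_dil hpos.1
        have hb' : (0:ℝ) ≤ -p.2 := nonneg_of_dil hpos.2
        exact ⟨lt_of_le_of_ne ha (Ne.symm hne1), not_lt.mpr (by linarith)⟩
    · exact eu_fin4
  have hmem : ∀ k : ℤ, (dil k p ∈ (W₁ ∪ sx '' W₁ ∪ sxy '' W₁ ∪ sy '' W₁)) ↔
      ∃ i : Fin 4, dil k p ∈ V i := by
    intro k
    constructor
    · rintro (((h | h) | h) | h)
      exacts [⟨0, h⟩, ⟨1, h⟩, ⟨2, h⟩, ⟨3, h⟩]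
    · rintro ⟨i, hi⟩
      fin_cases i <;> simp only [hV, Matrix.cons_val_zero, Matrix.cons_val_one,
        Matrix.head_cons, Matrix.cons_val_two, Matrix.tail_cons, Matrix.cons_val_three] at hi
      · exact Or.inl (Or.inl (Or.inl hi))
      · exact Or.inl (Or.inl (Or.inr hi))
      · exact Or.inl (Or.inr hi)
      · exact Or.inr hi
  rw [existsUnique_congr hmem]
  exact hcomb

/-- Example 11 of the paper; the "four corners set".  With
`Q = [0, π) × [0, π)` and `Q' = Q ∖ ([0, π/2) × [0, π/2))`, there is a measurable set
`W₁ ⊆ Q' ∪ (Q + (2π, 2π))` that is `2πℤ²`-translation congruent to `Q` and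
`2`-dilation congruent to `Q'`; and for any such `W₁`, the union of `W₁` with its
reflections in the two coordinate axes and the origin is a wavelet set in `ℝ²` for
dilation `2I`. -/
theorem stmt_17 :
    (∃ W₁ : Set (ℝ × ℝ), MeasurableSet W₁ ∧
      W₁ ⊆ (Ico 0 π ×ˢ Ico 0 π \ Ico 0 (π / 2) ×ˢ Ico 0 (π / 2)) ∪
        ((fun p : ℝ × ℝ => (p.1 + 2 * π, p.2 + 2 * π)) '' (Ico 0 π ×ˢ Ico 0 π)) ∧
      TransCongruent2 W₁ (Ico 0 π ×ˢ Ico 0 π) ∧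
      DilCongruent2 W₁ (Ico 0 π ×ˢ Ico 0 π \ Ico 0 (π / 2) ×ˢ Ico 0 (π / 2))) ∧
    (∀ W₁ : Set (ℝ × ℝ), MeasurableSet W₁ →
      W₁ ⊆ (Ico 0 π ×ˢ Ico 0 π \ Ico 0 (π / 2) ×ˢ Ico 0 (π / 2)) ∪
        ((fun p : ℝ × ℝ => (p.1 + 2 * π, p.2 + 2 * π)) '' (Ico 0 π ×ˢ Ico 0 π)) →
      TransCongruent2 W₁ (Ico 0 π ×ˢ Ico 0 π) →
      DilCongruent2 W₁ (Ico 0 π ×ˢ Ico 0 π \ Ico 0 (π / 2) ×ˢ Ico 0 (π / 2)) →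
      IsWaveletSet2
        (W₁ ∪ (fun p : ℝ × ℝ => (-p.1, p.2)) '' W₁ ∪
          (fun p : ℝ × ℝ => (-p.1, -p.2)) '' W₁ ∪
          (fun p : ℝ × ℝ => (p.1, -p.2)) '' W₁)) := by
  constructor
  · exact ⟨Sst ∪ TstV, Sst_meas.union TstV_meas, part1_subset, part1_trans, part1_dil⟩
  · intro W₁ hmeas hsub hTC hDC
    have hsub' : W₁ ⊆ Qp ∪ imgQ := hsub
    refine ⟨?_, ?_, ?_⟩
    · have h1 : (fun p : ℝ × ℝ => (-p.1, p.2)) '' W₁ = sx ⁻¹' W₁ :=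
        invol_image_eq_preimage sx_invol W₁
      have h2 : (fun p : ℝ × ℝ => (-p.1, -p.2)) '' W₁ = sxy ⁻¹' W₁ :=
        invol_image_eq_preimage sxy_invol W₁
      have h3 : (fun p : ℝ × ℝ => (p.1, -p.2)) '' W₁ = sy ⁻¹' W₁ :=
        invol_image_eq_preimage sy_invol W₁
      rw [h1, h2, h3]
      exact ((hmeas.union (hmeas.preimage sx_mp.measurable)).union
        (hmeas.preimage sxy_mp.measurable)).union (hmeas.preimage sy_mp.measurable)
    · exact part2_trans hsub' hTC
    · exact part2_dil hsub' hDC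
end
end
end

section
/- Let T = {(x, y) ∈ ℝ² : x ≥ −π, y ≤ π, y ≥ x} and T' = T ∖ {(x, y) : x ≥ −π/2, y ≤ π/2, y ≥ x}. Then, modulo null sets, T' ⊆ T, T + (−2π, 2π) ⊆ 4T', and T' ∩ (T + (−2π, 2π)) is null; hence there exists a measurable set W₁ ⊆ T' ∪ (T + (−2π, 2π)) that is 2πℤ²-translation congruent to T and 2-dilation congruent to T'. Moreover, for any such W₁, letting W₂ be the image of W₁ under the reflection (x, y) ↦ (y, x), the set W₁ ∪ W₂ is a wavelet set in ℝ² for the dilation matrix 2I (the 'pine tree' wavelet set). -/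
open MeasureTheory Set
open scoped Real symmDiff

noncomputable section

/-- The half-plane triangle region `T = {(x, y) : x ≥ −π, y ≤ π, y ≥ x}`. -/
def Tset : Set (ℝ × ℝ) := {p : ℝ × ℝ | -π ≤ p.1 ∧ p.2 ≤ π ∧ p.1 ≤ p.2}

/-- `T' = T ∖ {(x, y) : x ≥ −π/2, y ≤ π/2, y ≥ x}`. -/
def Tset' : Set (ℝ × ℝ) :=
  Tset \ {p : ℝ × ℝ | -(π / 2) ≤ p.1 ∧ p.2 ≤ π / 2 ∧ p.1 ≤ p.2}

/-- The translate `T + (−2π, 2π)`. -/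
def Ttrans : Set (ℝ × ℝ) := (fun p : ℝ × ℝ => (p.1 - 2 * π, p.2 + 2 * π)) '' Tset

open scoped ENNReal

namespace Stmt19Aux

/-! ### Generic multiplicity machinery -/

lemma tsum_indicator_eq_one_iff {ι α : Type*} [Countable ι] (S : Set α) (u : ι → α) :
    ∑' i, S.indicator (1 : α → ℝ≥0∞) (u i) = 1 ↔ ∃! i, u i ∈ S := by
  classical
  constructor
  · intro h
    have hex : ∃ i, u i ∈ S := by
      by_contra hc
      push_neg at hc
      rw [tsum_congr (fun i => Set.indicator_of_notMem (hc i) _), tsum_zero] at h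
      norm_num at h
    obtain ⟨i₀, hi₀⟩ := hex
    refine ⟨i₀, hi₀, ?_⟩
    intro j hj
    by_contra hne
    have hle : ∑ i ∈ ({j, i₀} : Finset ι), S.indicator (1 : α → ℝ≥0∞) (u i) ≤
        ∑' i, S.indicator (1 : α → ℝ≥0∞) (u i) := ENNReal.sum_le_tsum _
    rw [Finset.sum_pair hne, Set.indicator_of_mem hj, Set.indicator_of_mem hi₀, h] at hle
    norm_num at hle
  · rintro ⟨i₀, hi₀, hu⟩
    rw [tsum_eq_single i₀ (fun b hb => Set.indicator_of_notMem
      (fun hbmem => hb (hu b hbmem)) _)]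
    simp [Set.indicator_of_mem hi₀]

lemma indicator_iUnion_apply {ι α : Type*} [Countable ι] (P : ι → Set α) (x : α)
    (h : ∀ i j, i ≠ j → ¬(x ∈ P i ∧ x ∈ P j)) :
    (⋃ i, P i).indicator (1 : α → ℝ≥0∞) x = ∑' i, (P i).indicator (1 : α → ℝ≥0∞) x := by
  classical
  by_cases hx : x ∈ ⋃ i, P i
  · obtain ⟨i₀, hi₀⟩ := mem_iUnion.1 hx
    rw [Set.indicator_of_mem hx, tsum_eq_single i₀
      (fun b hb => Set.indicator_of_notMem (fun hbm => h b i₀ hb ⟨hbm, hi₀⟩) _)]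
    simp [Set.indicator_of_mem hi₀]
  · rw [Set.indicator_of_notMem hx]
    symm
    rw [ENNReal.tsum_eq_zero]
    exact fun i => Set.indicator_of_notMem (fun hi => hx (mem_iUnion.2 ⟨i, hi⟩)) _

def multFn {G : Type*} (a : G → ℝ × ℝ → ℝ × ℝ) (A : Set (ℝ × ℝ)) (p : ℝ × ℝ) : ℝ≥0∞ :=
  ∑' g, A.indicator (1 : ℝ × ℝ → ℝ≥0∞) (a g p)

lemma ae_nmem {G : Type*} [Countable G] {a : G → ℝ × ℝ → ℝ × ℝ}
    (hnull : ∀ g (N : Set (ℝ × ℝ)), volume N = 0 → volume {p : ℝ × ℝ | a g p ∈ N} = 0)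
    {N : Set (ℝ × ℝ)} (hN : volume N = 0) :
    ∀ᵐ p : ℝ × ℝ, ∀ g, a g p ∉ N := by
  rw [MeasureTheory.ae_all_iff]
  intro g
  rw [MeasureTheory.ae_iff]
  simpa using hnull g N hN

lemma ae_pairwise {G ι : Type*} [Countable G] [Countable ι] {a : G → ℝ × ℝ → ℝ × ℝ}
    (hnull : ∀ g (N : Set (ℝ × ℝ)), volume N = 0 → volume {p : ℝ × ℝ | a g p ∈ N} = 0)
    {P : ι → Set (ℝ × ℝ)}
    (hP : ∀ i j, i ≠ j → volume (P i ∩ P j) = 0) :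
    ∀ᵐ p : ℝ × ℝ, ∀ i j, i ≠ j → ∀ g, a g p ∉ P i ∩ P j := by
  rw [MeasureTheory.ae_all_iff]
  intro i
  rw [MeasureTheory.ae_all_iff]
  intro j
  by_cases hij : i = j
  · exact Filter.Eventually.of_forall fun p h => absurd hij h
  · filter_upwards [ae_nmem hnull (hP i j hij)] with p hp
    exact fun _ => hp

lemma mult_congr {G : Type*} [AddCommGroup G] [Countable G]
    (a : G → ℝ × ℝ → ℝ × ℝ)
    (hadd : ∀ g h p, a g (a h p) = a (g + h) p)
    (h0 : ∀ p, a 0 p = p)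
    (hnull : ∀ g (N : Set (ℝ × ℝ)), volume N = 0 → volume {p : ℝ × ℝ | a g p ∈ N} = 0)
    {A B : Set (ℝ × ℝ)} {P : G → Set (ℝ × ℝ)}
    (hA : IsAEPartition2 P A)
    (hB : IsAEPartition2 (fun g => a g '' P g) B) :
    ∀ᵐ p : ℝ × ℝ, multFn a A p = multFn a B p := by
  have hmem_img : ∀ (h : G) (x : ℝ × ℝ), x ∈ a h '' P h ↔ a (-h) x ∈ P h := by
    intro h x
    constructor
    · rintro ⟨q, hq, rfl⟩
      rwa [hadd, neg_add_cancel, h0]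
    · intro hx
      exact ⟨a (-h) x, hx, by rw [hadd, add_neg_cancel, h0]⟩
  filter_upwards [ae_nmem hnull hA.1, ae_pairwise hnull hA.2,
    ae_nmem hnull hB.1, ae_pairwise hnull hB.2] with p h1 h2 h3 h4
  have e1 : multFn a A p = ∑' g, ∑' h, (P h).indicator (1 : ℝ × ℝ → ℝ≥0∞) (a g p) := by
    refine tsum_congr fun g => ?_
    have hiff : a g p ∈ A ↔ a g p ∈ ⋃ i, P i := by
      have := h1 g
      by_cases hA' : a g p ∈ A <;> by_cases hU : a g p ∈ ⋃ i, P i <;>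
        simp_all [Set.mem_symmDiff]
    rw [← indicator_iUnion_apply _ _ (fun i j hij hc => h2 i j hij g ⟨hc.1, hc.2⟩)]
    by_cases hA' : a g p ∈ A
    · rw [Set.indicator_of_mem hA', Set.indicator_of_mem (hiff.1 hA')]
    · rw [Set.indicator_of_notMem hA', Set.indicator_of_notMem (fun hh => hA' (hiff.2 hh))]
  have e2 : multFn a B p
      = ∑' g, ∑' h, (P h).indicator (1 : ℝ × ℝ → ℝ≥0∞) (a (g + -h) p) := by
    refine tsum_congr fun g => ?_
    have hiff : a g p ∈ B ↔ a g p ∈ ⋃ i, a i '' P i := by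
      have := h3 g
      by_cases hB' : a g p ∈ B <;> by_cases hU : a g p ∈ ⋃ i, a i '' P i <;>
        simp_all [Set.mem_symmDiff]
    have step : B.indicator (1 : ℝ × ℝ → ℝ≥0∞) (a g p)
        = ∑' h, (a h '' P h).indicator (1 : ℝ × ℝ → ℝ≥0∞) (a g p) := by
      rw [← indicator_iUnion_apply _ _ (fun i j hij hc => h4 i j hij g ⟨hc.1, hc.2⟩)]
      by_cases hB' : a g p ∈ B
      · rw [Set.indicator_of_mem hB', Set.indicator_of_mem (hiff.1 hB')]
      · rw [Set.indicator_of_notMem hB', Set.indicator_of_notMem (fun hh => hB' (hiff.2 hh))]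
    rw [step]
    refine tsum_congr fun h => ?_
    have hx : a (-h) (a g p) = a (g + -h) p := by rw [hadd, add_comm]
    by_cases hm : a g p ∈ a h '' P h
    · rw [Set.indicator_of_mem hm, Set.indicator_of_mem (by rw [← hx]; exact (hmem_img h _).1 hm)]
      simp
    · rw [Set.indicator_of_notMem hm, Set.indicator_of_notMem
        (fun hc => hm ((hmem_img h _).2 (by rwa [hx])))]
  rw [e1, e2]
  rw [ENNReal.tsum_comm]
  conv_rhs => rw [ENNReal.tsum_comm]
  refine tsum_congr fun h => ?_
  exact ((Equiv.addRight (-h)).tsum_eq (fun g => (P h).indicator 1 (a g p))).symm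

lemma multFn_union {G : Type*} (a : G → ℝ × ℝ → ℝ × ℝ) {A B : Set (ℝ × ℝ)} {p : ℝ × ℝ}
    (h : ∀ g, a g p ∉ A ∩ B) :
    multFn a (A ∪ B) p = multFn a A p + multFn a B p := by
  unfold multFn
  rw [← ENNReal.tsum_add]
  refine tsum_congr fun g => ?_
  by_cases hA : a g p ∈ A <;> by_cases hB : a g p ∈ B
  · exact absurd ⟨hA, hB⟩ (h g)
  all_goals simp [Set.indicator_apply, hA, hB]

/-! ### The two group actions -/

def aT (m : ℤ × ℤ) (p : ℝ × ℝ) : ℝ × ℝ :=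
  (p.1 + 2 * Real.pi * (m.1 : ℝ), p.2 + 2 * Real.pi * (m.2 : ℝ))

def aD (k : ℤ) (p : ℝ × ℝ) : ℝ × ℝ := ((2 : ℝ) ^ k * p.1, (2 : ℝ) ^ k * p.2)

lemma aT_add : ∀ (m n : ℤ × ℤ) (p : ℝ × ℝ), aT m (aT n p) = aT (m + n) p := by
  intro m n p
  simp only [aT, Prod.mk.injEq, Prod.fst_add, Prod.snd_add]
  constructor <;> push_cast <;> ring

lemma aT_zero : ∀ p : ℝ × ℝ, aT 0 p = p := by
  intro p; simp [aT]

lemma aT_null : ∀ (m : ℤ × ℤ) (N : Set (ℝ × ℝ)), volume N = 0 →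
    volume {p : ℝ × ℝ | aT m p ∈ N} = 0 := by
  intro m N hN
  have he : {p : ℝ × ℝ | aT m p ∈ N}
      = (fun p : ℝ × ℝ => p + (2 * Real.pi * (m.1 : ℝ), 2 * Real.pi * (m.2 : ℝ))) ⁻¹' N := by
    ext p
    simp [aT, Set.mem_preimage, Prod.ext_iff]
    rfl
  rw [he]
  exact (measurePreserving_add_right volume _).quasiMeasurePreserving.preimage_null hN

lemma two_zpow_pos (k : ℤ) : (0 : ℝ) < (2 : ℝ) ^ k := zpow_pos (by norm_num) k

lemma aD_add : ∀ (k j : ℤ) (p : ℝ × ℝ), aD k (aD j p) = aD (k + j) p := by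
  intro k j p
  simp only [aD, Prod.mk.injEq]
  rw [zpow_add₀ (by norm_num : (2:ℝ) ≠ 0)]
  constructor <;> ring

lemma aD_zero : ∀ p : ℝ × ℝ, aD 0 p = p := by
  intro p; simp [aD]

lemma aD_null : ∀ (k : ℤ) (N : Set (ℝ × ℝ)), volume N = 0 →
    volume {p : ℝ × ℝ | aD k p ∈ N} = 0 := by
  intro k N hN
  have he : {p : ℝ × ℝ | aD k p ∈ N} = (fun p : ℝ × ℝ => (2:ℝ)^k • p) ⁻¹' N := by
    ext p
    have : (2:ℝ)^k • p = ((2:ℝ)^k * p.1, (2:ℝ)^k * p.2) := rfl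
    simp [aD, Set.mem_preimage, this]
  rw [he, Measure.addHaar_preimage_smul volume (ne_of_gt (two_zpow_pos k))]
  simp [hN]

lemma swap_mp : MeasurePreserving (Prod.swap : ℝ × ℝ → ℝ × ℝ) volume volume := by
  rw [Measure.volume_eq_prod]
  exact Measure.measurePreserving_swap

lemma multFn_swap_aT (S : Set (ℝ × ℝ)) (p : ℝ × ℝ) :
    multFn aT (Prod.swap ⁻¹' S) p = multFn aT S (Prod.swap p) := by
  unfold multFn
  rw [← (Equiv.prodComm ℤ ℤ).tsum_eq (fun m => S.indicator (1 : ℝ × ℝ → ℝ≥0∞)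
    (aT m (Prod.swap p)))]
  refine tsum_congr fun m => ?_
  have he : aT (Equiv.prodComm ℤ ℤ m) (Prod.swap p) = Prod.swap (aT m p) := rfl
  rw [he]
  by_cases h : aT m p ∈ Prod.swap ⁻¹' S
  · rw [Set.indicator_of_mem h, Set.indicator_of_mem (by exact h)]
    simp
  · rw [Set.indicator_of_notMem h, Set.indicator_of_notMem (by exact h)]

lemma multFn_swap_aD (S : Set (ℝ × ℝ)) (p : ℝ × ℝ) :
    multFn aD (Prod.swap ⁻¹' S) p = multFn aD S (Prod.swap p) := by
  unfold multFn
  refine tsum_congr fun k => ?_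
  have he : aD k (Prod.swap p) = Prod.swap (aD k p) := rfl
  rw [he]
  by_cases h : aD k p ∈ Prod.swap ⁻¹' S
  · rw [Set.indicator_of_mem h, Set.indicator_of_mem (by exact h)]
    simp
  · rw [Set.indicator_of_notMem h, Set.indicator_of_notMem (by exact h)]

/-! ### Basic geometry -/

lemma mem_Ttrans (q : ℝ × ℝ) :
    q ∈ Ttrans ↔ (-π ≤ q.1 + 2*π ∧ q.2 - 2*π ≤ π ∧ q.1 + 2*π ≤ q.2 - 2*π) := by
  constructor
  · rintro ⟨⟨x, y⟩, ⟨h1, h2, h3⟩, rfl⟩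
    dsimp only
    refine ⟨by linarith, by linarith, by linarith⟩
  · rintro ⟨h1, h2, h3⟩
    exact ⟨(q.1 + 2*π, q.2 - 2*π), ⟨h1, h2, h3⟩, by ext <;> dsimp <;> ring⟩

lemma Tsub : Tset' ⊆ Tset := diff_subset

lemma Tset_bounds {p : ℝ × ℝ} (h : p ∈ Tset) :
    -π ≤ p.1 ∧ p.1 ≤ π ∧ -π ≤ p.2 ∧ p.2 ≤ π := by
  obtain ⟨h1, h2, h3⟩ := h
  exact ⟨h1, le_trans h3 h2, le_trans h1 h3, h2⟩

lemma Ttrans_bounds {p : ℝ × ℝ} (h : p ∈ Ttrans) : p.1 ≤ -π ∧ π ≤ p.2 := by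
  rw [mem_Ttrans] at h
  obtain ⟨h1, h2, h3⟩ := h
  constructor <;> linarith

lemma T'_inter_Ttrans : Tset' ∩ Ttrans = ∅ := by
  ext p
  simp only [mem_inter_iff, mem_empty_iff_false, iff_false, not_and]
  intro hp' hpt
  obtain ⟨a1, a2, a3⟩ := Tsub hp'
  rw [mem_Ttrans] at hpt
  obtain ⟨b1, b2, b3⟩ := hpt
  have := Real.pi_pos
  linarith

lemma measurableSet_Tset : MeasurableSet Tset := by
  have : Tset = {p : ℝ × ℝ | -π ≤ p.1} ∩ ({p | p.2 ≤ π} ∩ {p | p.1 ≤ p.2}) := by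
    rfl
  rw [this]
  refine ((isClosed_le continuous_const continuous_fst).measurableSet).inter
    (((isClosed_le continuous_snd continuous_const).measurableSet).inter
    ((isClosed_le continuous_fst continuous_snd).measurableSet))

lemma measurableSet_inner :
    MeasurableSet {p : ℝ × ℝ | -(π / 2) ≤ p.1 ∧ p.2 ≤ π / 2 ∧ p.1 ≤ p.2} := by
  have : {p : ℝ × ℝ | -(π / 2) ≤ p.1 ∧ p.2 ≤ π / 2 ∧ p.1 ≤ p.2}
      = {p : ℝ × ℝ | -(π/2) ≤ p.1} ∩ ({p | p.2 ≤ π/2} ∩ {p | p.1 ≤ p.2}) := by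
    rfl
  rw [this]
  refine ((isClosed_le continuous_const continuous_fst).measurableSet).inter
    (((isClosed_le continuous_snd continuous_const).measurableSet).inter
    ((isClosed_le continuous_fst continuous_snd).measurableSet))

lemma measurableSet_Tset' : MeasurableSet Tset' :=
  measurableSet_Tset.diff measurableSet_inner

lemma line1_null (c : ℝ) : volume ({p : ℝ × ℝ | p.1 = c}) = 0 := by
  have : {p : ℝ × ℝ | p.1 = c} = {c} ×ˢ (univ : Set ℝ) := by
    ext ⟨a, b⟩; simp [Set.mem_prod, eq_comm]
  rw [this, Measure.volume_eq_prod, Measure.prod_prod]; simp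

lemma line2_null (c : ℝ) : volume ({p : ℝ × ℝ | p.2 = c}) = 0 := by
  have : {p : ℝ × ℝ | p.2 = c} = (univ : Set ℝ) ×ˢ {c} := by
    ext ⟨a, b⟩; simp [Set.mem_prod, eq_comm]
  rw [this, Measure.volume_eq_prod, Measure.prod_prod]; simp

lemma diag_null : volume ({p : ℝ × ℝ | p.1 = p.2}) = 0 := by
  have hm : MeasurableSet {p : ℝ × ℝ | p.1 = p.2} :=
    (isClosed_eq continuous_fst continuous_snd).measurableSet
  rw [Measure.volume_eq_prod, Measure.prod_apply hm]
  have h : ∀ x : ℝ, (volume (Prod.mk x ⁻¹' {p : ℝ × ℝ | p.1 = p.2})) = 0 := by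
    intro x
    have : (Prod.mk x ⁻¹' {p : ℝ × ℝ | p.1 = p.2}) = {x} := by ext y; simp [eq_comm]
    rw [this]; exact measure_singleton x
  simp [h]

lemma singleton_null (x : ℝ × ℝ) : volume ({x} : Set (ℝ × ℝ)) = 0 := by
  rw [← Set.singleton_prod_singleton, Measure.volume_eq_prod, Measure.prod_prod]; simp

end Stmt19Aux

namespace Stmt19Aux

/-! ### 1-D translation uniqueness and the square -/

lemma oneDim (x : ℝ) (hx : ∀ n : ℤ, x ≠ π + 2*π*n) :
    ∃! n : ℤ, -π ≤ x + 2*π*n ∧ x + 2*π*n ≤ π := by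
  have hπ := Real.pi_pos
  obtain ⟨t, ht⟩ : ∃ t : ℝ, t = (x + π) / (2*π) := ⟨_, rfl⟩
  have h2π : (2*π) ≠ 0 := by positivity
  have htval : 2*π*t = x + π := by rw [ht]; field_simp
  obtain ⟨m, hm⟩ : ∃ m : ℤ, m = ⌊t⌋ := ⟨_, rfl⟩
  obtain ⟨f, hf⟩ : ∃ f : ℝ, f = Int.fract t := ⟨_, rfl⟩
  have hf0 : 0 ≤ f := hf ▸ Int.fract_nonneg t
  have hf1 : f < 1 := hf ▸ Int.fract_lt_one t
  have hmf : (m:ℝ) = t - f := by rw [hm, hf]; exact (Int.self_sub_fract t).symm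
  have h2m : 2*π*(m:ℝ) = 2*π*t - 2*π*f := by rw [hmf]; ring
  have hxval : x = -π + 2*π*f + 2*π*(m:ℝ) := by linarith
  have hval : x + 2*π*((-m : ℤ):ℝ) = -π + 2*π*f := by push_cast; linarith
  refine ⟨-m, ⟨by rw [hval]; nlinarith, by rw [hval]; nlinarith⟩, ?_⟩
  rintro n ⟨hn1, hn2⟩
  obtain ⟨e, he⟩ : ∃ e : ℤ, e = m + n := ⟨_, rfl⟩
  have hv : x + 2*π*(n:ℝ) = -π + 2*π*f + 2*π*((e : ℤ):ℝ) := by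
    rw [he]; push_cast; linarith
  have ha : 0 ≤ f + (e:ℝ) := by nlinarith [hn1, hv]
  have hb : f + (e:ℝ) ≤ 1 := by nlinarith [hn2, hv]
  have hegt : (-1:ℝ) < (e:ℝ) := by linarith
  have hele : (e:ℝ) ≤ 1 := by linarith
  have hegt' : (-1 : ℤ) < e := by exact_mod_cast hegt
  have hele' : e ≤ 1 := by exact_mod_cast hele
  have hcase : e = 0 ∨ e = 1 := by omega
  rcases hcase with h | h
  · omega
  · exfalso
    have hf00 : f = 0 := by
      have : (e:ℝ) = 1 := by exact_mod_cast h
      linarith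
    exact hx (m - 1) (by rw [hxval, hf00]; push_cast; ring)

def Sq : Set (ℝ × ℝ) := {p : ℝ × ℝ | (-π ≤ p.1 ∧ p.1 ≤ π) ∧ (-π ≤ p.2 ∧ p.2 ≤ π)}

lemma T_union_swap : Tset ∪ Prod.swap ⁻¹' Tset = Sq := by
  ext ⟨x, y⟩
  simp only [Tset, Sq, Set.mem_union, Set.mem_preimage, Set.mem_setOf_eq, Prod.swap_prod_mk]
  constructor
  · rintro (⟨h1, h2, h3⟩ | ⟨h1, h2, h3⟩)
    · exact ⟨⟨h1, by linarith⟩, by linarith, h2⟩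
    · exact ⟨⟨by linarith, h2⟩, h1, by linarith⟩
  · rintro ⟨⟨h1, h2⟩, h3, h4⟩
    rcases le_total x y with h | h
    · exact Or.inl ⟨h1, h4, h⟩
    · exact Or.inr ⟨h3, h2, h⟩

lemma T_inter_swap_sub : Tset ∩ Prod.swap ⁻¹' Tset ⊆ {p : ℝ × ℝ | p.1 = p.2} := by
  rintro ⟨x, y⟩ ⟨h1, h2⟩
  simp only [Tset, Set.mem_preimage, Set.mem_setOf_eq, Prod.swap_prod_mk] at h1 h2 ⊢
  exact le_antisymm h1.2.2 h2.2.2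

lemma sq_ae : ∀ᵐ p : ℝ × ℝ, ∃! m : ℤ × ℤ, aT m p ∈ Sq := by
  have hB1 : volume (⋃ n : ℤ, {p : ℝ × ℝ | p.1 = π + 2*π*n}) = 0 :=
    measure_iUnion_null fun n => line1_null _
  have hB2 : volume (⋃ n : ℤ, {p : ℝ × ℝ | p.2 = π + 2*π*n}) = 0 :=
    measure_iUnion_null fun n => line2_null _
  filter_upwards [measure_eq_zero_iff_ae_notMem.1 hB1, measure_eq_zero_iff_ae_notMem.1 hB2]
    with p hp1 hp2
  have hx : ∀ n : ℤ, p.1 ≠ π + 2*π*n := fun n hn => hp1 (mem_iUnion.2 ⟨n, hn⟩)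
  have hy : ∀ n : ℤ, p.2 ≠ π + 2*π*n := fun n hn => hp2 (mem_iUnion.2 ⟨n, hn⟩)
  obtain ⟨n₁, hn₁, hu₁⟩ := oneDim p.1 hx
  obtain ⟨n₂, hn₂, hu₂⟩ := oneDim p.2 hy
  refine ⟨(n₁, n₂), ⟨⟨hn₁.1, hn₁.2⟩, hn₂.1, hn₂.2⟩, ?_⟩
  rintro ⟨a, b⟩ ⟨⟨ha1, ha2⟩, hb1, hb2⟩
  exact Prod.ext (hu₁ a ⟨ha1, ha2⟩) (hu₂ b ⟨hb1, hb2⟩)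

/-! ### Dilation uniqueness -/

lemma dil_none {x y : ℝ} (hxy : y < x) (k : ℤ) : aD k (x, y) ∉ Tset' := by
  rintro ⟨⟨-, -, h3⟩, -⟩
  have := (mul_le_mul_iff_right₀ (two_zpow_pos k)).1 h3
  linarith

lemma dil_unique {x y : ℝ} (hxy : x < y) : ∃! k : ℤ, aD k (x, y) ∈ Tset' := by
  have hπ := Real.pi_pos
  set D : ℤ → Prop := fun k => -π ≤ (2:ℝ)^k * x ∧ (2:ℝ)^k * y ≤ π with hD
  have hmono : ∀ k k' : ℤ, k ≤ k' → D k' → D k := by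
    rintro k k' hkk' ⟨hd1, hd2⟩
    have hle : (2:ℝ)^k ≤ (2:ℝ)^k' := by
      apply zpow_le_zpow_right₀ (by norm_num) hkk'
    constructor
    · rcases le_or_gt 0 x with hx | hx
      · nlinarith [two_zpow_pos k]
      · nlinarith [mul_le_mul_of_nonpos_right hle hx.le]
    · rcases le_or_gt y 0 with hy | hy
      · nlinarith [two_zpow_pos k]
      · nlinarith [mul_le_mul_of_nonneg_right hle hy.le]
  have hexists : ∃ k, D k := by
    obtain ⟨n, hn⟩ := exists_pow_lt_of_lt_one
      (show (0:ℝ) < π / (|x| + |y| + 1) by positivity)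
      (show (1:ℝ)/2 < 1 by norm_num)
    refine ⟨-(n:ℤ), ?_, ?_⟩
    · have hpow : (2:ℝ)^(-(n:ℤ)) = (1/2 : ℝ)^n := by
        rw [zpow_neg, zpow_natCast, ← inv_pow]; norm_num
      have hb : (2:ℝ)^(-(n:ℤ)) * (|x| + |y| + 1) < π := by
        rw [hpow]
        have hM : (0:ℝ) < |x| + |y| + 1 := by positivity
        calc (1/2:ℝ)^n * (|x| + |y| + 1) < (π / (|x| + |y| + 1)) * (|x| + |y| + 1) := by
              apply mul_lt_mul_of_pos_right hn hM
          _ = π := by field_simp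
      have habs : |(2:ℝ)^(-(n:ℤ)) * x| < π := by
        rw [abs_mul, abs_of_pos (two_zpow_pos _)]
        nlinarith [abs_nonneg x, abs_nonneg y, two_zpow_pos (-(n:ℤ))]
      have := abs_lt.1 habs
      linarith [this.1]
    · have hpow : (2:ℝ)^(-(n:ℤ)) = (1/2 : ℝ)^n := by
        rw [zpow_neg, zpow_natCast, ← inv_pow]; norm_num
      have hb : (2:ℝ)^(-(n:ℤ)) * (|x| + |y| + 1) < π := by
        rw [hpow]
        have hM : (0:ℝ) < |x| + |y| + 1 := by positivity
        calc (1/2:ℝ)^n * (|x| + |y| + 1) < (π / (|x| + |y| + 1)) * (|x| + |y| + 1) := by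
              apply mul_lt_mul_of_pos_right hn hM
          _ = π := by field_simp
      have habs : |(2:ℝ)^(-(n:ℤ)) * y| < π := by
        rw [abs_mul, abs_of_pos (two_zpow_pos _)]
        nlinarith [abs_nonneg x, abs_nonneg y, two_zpow_pos (-(n:ℤ))]
      have := abs_lt.1 habs
      linarith [this.2]
  have hnon : ∃ k, ¬ D k := by
    rcases lt_or_ge 0 y with hy | hy
    · obtain ⟨n, hn⟩ := pow_unbounded_of_one_lt (π / y) (by norm_num : (1:ℝ) < 2)
      refine ⟨(n:ℤ), fun hDk => ?_⟩
      have : π < 2^n * y := by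
        rw [div_lt_iff₀ hy] at hn; linarith
      obtain ⟨hd1, hd2⟩ := hDk
      rw [zpow_natCast] at hd2
      linarith
    · have hx : x < 0 := lt_of_lt_of_le hxy hy
      obtain ⟨n, hn⟩ := pow_unbounded_of_one_lt (π / (-x)) (by norm_num : (1:ℝ) < 2)
      refine ⟨(n:ℤ), fun hDk => ?_⟩
      have : π < 2^n * (-x) := by
        rw [div_lt_iff₀ (by linarith : (0:ℝ) < -x)] at hn; linarith
      obtain ⟨hd1, hd2⟩ := hDk
      rw [zpow_natCast] at hd1
      linarith
  obtain ⟨k₀, hk₀⟩ := hexists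
  obtain ⟨mm, hmm, hleast⟩ := Int.exists_least_of_bdd (P := fun k => ¬ D k)
    ⟨k₀, fun z hz => by
      by_contra hlt
      push_neg at hlt
      exact hz (hmono z k₀ (by omega) hk₀)⟩ hnon
  have hscale : ∀ (k : ℤ) (z : ℝ), (2:ℝ)^(k+1) * z = 2*((2:ℝ)^k * z) := by
    intro k z
    rw [zpow_add_one₀ (by norm_num : (2:ℝ) ≠ 0)]
    ring
  have key : ∀ k : ℤ, (aD k (x,y) ∈ Tset') ↔ (D k ∧ ¬ D (k+1)) := by
    intro k
    have hxy' : (2:ℝ)^k * x ≤ (2:ℝ)^k * y :=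
      (mul_le_mul_iff_right₀ (two_zpow_pos k)).2 hxy.le
    simp only [Tset', Tset, aD, Set.mem_diff, Set.mem_setOf_eq]
    constructor
    · rintro ⟨⟨a1, a2, -⟩, hni⟩
      refine ⟨⟨a1, a2⟩, ?_⟩
      rintro ⟨b1, b2⟩
      rw [hscale] at b1 b2
      exact hni ⟨by linarith, by linarith, hxy'⟩
    · rintro ⟨⟨a1, a2⟩, hnd⟩
      refine ⟨⟨a1, a2, hxy'⟩, fun hc => ?_⟩
      obtain ⟨c1, c2, -⟩ := hc
      exact hnd ⟨by rw [hscale]; linarith, by rw [hscale]; linarith⟩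
  refine ⟨mm - 1, (key _).2 ⟨?_, ?_⟩, ?_⟩
  · by_contra h
    have := hleast _ h
    omega
  · rw [sub_add_cancel]; exact hmm
  · intro k hk
    rw [key] at hk
    obtain ⟨hk1, hk2⟩ := hk
    have h1 := hleast _ hk2
    have h2 : ¬ (mm ≤ k) := fun hle => hmm (hmono mm k hle hk1)
    omega

end Stmt19Aux

namespace Stmt19Aux

/-! ### Construction of W₁ -/

lemma pairPartition {ι : Type*} [DecidableEq ι] {i₁ i₂ : ι} (hij : i₁ ≠ i₂)
    {S₁ S₂ X : Set (ℝ × ℝ)} (hS : volume (S₁ ∩ S₂) = 0)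
    (hX : volume ((S₁ ∪ S₂) ∆ X) = 0) :
    IsAEPartition2 (fun m => if m = i₁ then S₁ else if m = i₂ then S₂ else ∅) X := by
  constructor
  · have hU : (⋃ m, if m = i₁ then S₁ else if m = i₂ then S₂ else ∅) = S₁ ∪ S₂ := by
      apply subset_antisymm
      · refine iUnion_subset fun m => ?_
        split_ifs
        · exact subset_union_left
        · exact subset_union_right
        · exact empty_subset _
      · rintro p (hp | hp)
        · exact mem_iUnion.2 ⟨i₁, by simp [hp]⟩
        · exact mem_iUnion.2 ⟨i₂, by simp [if_neg (Ne.symm hij), hp]⟩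
    rw [hU]
    rwa [symmDiff_comm]
  · intro i j hij'
    dsimp only
    split_ifs with h1 h2 h3 h3 h4 h5
    · exact absurd (h1.trans h2.symm) hij'
    · exact hS
    · simp
    · rw [Set.inter_comm]; exact hS
    · exact absurd (h3.trans h5.symm) hij'
    · simp
    · simp
    · simp
    · simp

def gmap (p : ℝ × ℝ) : ℝ × ℝ := (4*p.1 + 2*π, 4*p.2 - 2*π)
def Fop (S : Set (ℝ × ℝ)) : Set (ℝ × ℝ) := Tset' ∩ (gmap ⁻¹' S ∪ gmap ⁻¹' Tsetᶜ)
def Aset : Set (ℝ × ℝ) := ⋃ n : ℕ, Fop^[n] ∅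
def Bset : Set (ℝ × ℝ) := (fun p : ℝ × ℝ => (p.1 + 2*π, p.2 - 2*π)) ⁻¹' (Tset \ Aset)
def Xset : Set (ℝ × ℝ) := gmap ⁻¹' (Tset \ Aset)

lemma measurable_gmap : Measurable gmap := by
  unfold gmap; fun_prop

lemma mem_Fop {S : Set (ℝ × ℝ)} {p : ℝ × ℝ} :
    p ∈ Fop S ↔ p ∈ Tset' ∧ (gmap p ∈ S ∨ gmap p ∉ Tset) := by
  simp [Fop]

lemma Fop_meas {S : Set (ℝ × ℝ)} (hS : MeasurableSet S) : MeasurableSet (Fop S) :=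
  measurableSet_Tset'.inter ((measurable_gmap hS).union
    (measurable_gmap measurableSet_Tset.compl))

lemma iter_meas (n : ℕ) : MeasurableSet (Fop^[n] ∅) := by
  induction n with
  | zero => simp
  | succ n ih => rw [Function.iterate_succ_apply']; exact Fop_meas ih

lemma Aset_meas : MeasurableSet Aset := MeasurableSet.iUnion iter_meas

lemma Aset_sub : Aset ⊆ Tset' := by
  refine iUnion_subset fun n => ?_
  cases n with
  | zero => simp
  | succ n => rw [Function.iterate_succ_apply']; exact inter_subset_left

lemma mem_Aset_iff (p : ℝ × ℝ) :
    p ∈ Aset ↔ p ∈ Tset' ∧ (gmap p ∈ Aset ∨ gmap p ∉ Tset) := by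
  constructor
  · intro hp
    obtain ⟨n, hn⟩ := mem_iUnion.1 hp
    cases n with
    | zero => simp at hn
    | succ n =>
      rw [Function.iterate_succ_apply', mem_Fop] at hn
      exact ⟨hn.1, hn.2.imp (fun h => mem_iUnion.2 ⟨n, h⟩) id⟩
  · rintro ⟨h1, h2 | h2⟩
    · obtain ⟨n, hn⟩ := mem_iUnion.1 h2
      refine mem_iUnion.2 ⟨n + 1, ?_⟩
      rw [Function.iterate_succ_apply', mem_Fop]
      exact ⟨h1, Or.inl hn⟩
    · refine mem_iUnion.2 ⟨1, ?_⟩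
      rw [Function.iterate_succ_apply', mem_Fop]
      exact ⟨h1, Or.inr h2⟩

lemma Aset_eq : Aset = Tset' \ Xset := by
  ext p
  rw [mem_Aset_iff]
  simp only [Xset, mem_diff, mem_preimage]
  tauto

lemma AX_disj : Aset ∩ Xset = ∅ := by
  rw [Aset_eq]
  ext p; simp only [mem_inter_iff, mem_diff, mem_empty_iff_false, iff_false, not_and]
  tauto

lemma X_diff_T' : Xset \ Tset' ⊆ {((-(π/2) : ℝ), (π/2 : ℝ))} := by
  have hπ := Real.pi_pos
  rintro p ⟨hX, hnT'⟩
  obtain ⟨⟨g1, g2, g3⟩, -⟩ : gmap p ∈ Tset \ Aset := hX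
  simp only [gmap] at g1 g2 g3
  have hmemT : p ∈ Tset := ⟨by linarith, by linarith, by linarith⟩
  have hinner : p ∈ {q : ℝ × ℝ | -(π / 2) ≤ q.1 ∧ q.2 ≤ π / 2 ∧ q.1 ≤ q.2} := by
    by_contra hni
    exact hnT' ⟨hmemT, hni⟩
  obtain ⟨i1, i2, i3⟩ := hinner
  have h1 : p.1 = -(π/2) := by linarith
  have h2 : p.2 = π/2 := by linarith
  simp only [mem_singleton_iff]
  exact Prod.ext h1 h2

lemma AX_union_vol : volume ((Aset ∪ Xset) ∆ Tset') = 0 := by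
  have hsub : (Aset ∪ Xset) ∆ Tset' ⊆ Xset \ Tset' := by
    rintro p hp
    rw [Set.mem_symmDiff] at hp
    rcases hp with ⟨hp1, hp2⟩ | ⟨hp1, hp2⟩
    · rcases hp1 with h | h
      · exact absurd (Aset_sub h) hp2
      · exact ⟨h, hp2⟩
    · exact absurd (Or.inl ((Aset_eq ▸ mem_diff _ |>.2) ⟨hp1, fun hX => hp2 (Or.inr hX)⟩ : p ∈ Aset)) hp2
  refine measure_mono_null (hsub.trans X_diff_T') (singleton_null _)

lemma Bset_sub : Bset ⊆ Ttrans := by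
  rintro p hp
  obtain ⟨⟨h1, h2, h3⟩, -⟩ : (p.1 + 2*π, p.2 - 2*π) ∈ Tset \ Aset := hp
  rw [mem_Ttrans]
  exact ⟨h1, h2, h3⟩

lemma Bset_meas : MeasurableSet Bset :=
  (by fun_prop : Measurable (fun p : ℝ × ℝ => (p.1 + 2*π, p.2 - 2*π)))
    (measurableSet_Tset.diff Aset_meas)

lemma AB_null : volume (Aset ∩ Bset) = 0 := by
  have h : Aset ∩ Bset ⊆ Tset' ∩ Ttrans := inter_subset_inter Aset_sub Bset_sub
  rw [T'_inter_Ttrans] at h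
  exact measure_mono_null h measure_empty

lemma transCong : TransCongruent2 (Aset ∪ Bset) Tset := by
  classical
  refine ⟨fun m => if m = ((0,0) : ℤ × ℤ) then Aset else if m = ((1,-1) : ℤ × ℤ) then Bset else ∅,
    ?_, ?_, ?_⟩
  · intro m
    show MeasurableSet (if m = ((0,0) : ℤ × ℤ) then Aset
      else if m = ((1,-1) : ℤ × ℤ) then Bset else ∅)
    split_ifs
    · exact Aset_meas
    · exact Bset_meas
    · exact MeasurableSet.empty
  · exact pairPartition (by decide) AB_null (by simp)
  · have himg : (fun m : ℤ × ℤ =>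
        (fun p : ℝ × ℝ => (p.1 + 2 * Real.pi * (m.1 : ℝ), p.2 + 2 * Real.pi * (m.2 : ℝ))) ''
          (if m = ((0,0) : ℤ × ℤ) then Aset else if m = ((1,-1) : ℤ × ℤ) then Bset else ∅))
        = (fun m : ℤ × ℤ => if m = ((0,0) : ℤ × ℤ) then Aset
            else if m = ((1,-1) : ℤ × ℤ) then Tset \ Aset else ∅) := by
      funext m
      by_cases h0 : m = ((0,0) : ℤ × ℤ)
      · subst h0
        simp only [if_pos rfl]
        ext q
        simp
      · by_cases h1 : m = ((1,-1) : ℤ × ℤ)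
        · subst h1
          simp only [if_neg (show ¬((1,-1) : ℤ×ℤ) = ((0,0) : ℤ×ℤ) by decide), if_pos rfl]
          ext q
          constructor
          · rintro ⟨b, hb, rfl⟩
            show (b.1 + 2 * Real.pi * ((((1,-1) : ℤ×ℤ).1 : ℤ) : ℝ),
              b.2 + 2 * Real.pi * ((((1,-1) : ℤ×ℤ).2 : ℤ) : ℝ)) ∈ Tset \ Aset
            have hb' : (b.1 + 2*π, b.2 - 2*π) ∈ Tset \ Aset := hb
            have he : (b.1 + 2 * Real.pi * ((((1,-1) : ℤ×ℤ).1 : ℤ) : ℝ),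
                b.2 + 2 * Real.pi * ((((1,-1) : ℤ×ℤ).2 : ℤ) : ℝ))
                = (b.1 + 2*π, b.2 - 2*π) :=
              Prod.ext (by push_cast; ring) (by push_cast; ring)
            rwa [he]
          · intro hq
            refine ⟨(q.1 - 2*π, q.2 + 2*π), ?_, ?_⟩
            · show ((q.1 - 2*π) + 2*π, (q.2 + 2*π) - 2*π) ∈ Tset \ Aset
              have he : ((q.1 - 2*π) + 2*π, (q.2 + 2*π) - 2*π) = q :=
                Prod.ext (by show q.1 - 2*π + 2*π = q.1; ring)
                  (by show q.2 + 2*π - 2*π = q.2; ring)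
              rwa [he]
            · exact Prod.ext (by push_cast; show q.1 - 2*π + 2*π*(1:ℝ) = q.1; ring)
                (by push_cast; show q.2 + 2*π + 2*π*(-1:ℝ) = q.2; ring)
        · simp only [if_neg h0, if_neg h1, image_empty]
    rw [himg]
    refine pairPartition (by decide) ?_ ?_
    · rw [Set.inter_diff_self]; exact measure_empty
    · rw [Set.union_diff_cancel (Aset_sub.trans Tsub)]
      simp

lemma dil_img_zero : (fun p : ℝ × ℝ => ((2:ℝ)^(0:ℤ) * p.1, (2:ℝ)^(0:ℤ) * p.2)) '' Aset = Aset := by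
  ext q; simp

lemma dil_img_B :
    (fun p : ℝ × ℝ => ((2:ℝ)^(-2:ℤ) * p.1, (2:ℝ)^(-2:ℤ) * p.2)) '' Bset = Xset := by
  have hc : (2:ℝ)^(-2:ℤ) = 1/4 := by norm_num
  ext q
  constructor
  · rintro ⟨b, hb, rfl⟩
    have hb' : (b.1 + 2*π, b.2 - 2*π) ∈ Tset \ Aset := hb
    show gmap ((2:ℝ)^(-2:ℤ) * b.1, (2:ℝ)^(-2:ℤ) * b.2) ∈ Tset \ Aset
    have he : gmap ((2:ℝ)^(-2:ℤ) * b.1, (2:ℝ)^(-2:ℤ) * b.2) = (b.1 + 2*π, b.2 - 2*π) :=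
      Prod.ext (by show 4*((2:ℝ)^(-2:ℤ) * b.1) + 2*π = b.1 + 2*π; rw [hc]; ring)
        (by show 4*((2:ℝ)^(-2:ℤ) * b.2) - 2*π = b.2 - 2*π; rw [hc]; ring)
    rwa [he]
  · intro hq
    refine ⟨(4*q.1, 4*q.2), ?_, ?_⟩
    · show ((4*q.1) + 2*π, (4*q.2) - 2*π) ∈ Tset \ Aset
      exact hq
    · exact Prod.ext (by show (2:ℝ)^(-2:ℤ) * (4*q.1) = q.1; rw [hc]; ring)
        (by show (2:ℝ)^(-2:ℤ) * (4*q.2) = q.2; rw [hc]; ring)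

lemma dilCong : DilCongruent2 (Aset ∪ Bset) Tset' := by
  classical
  refine ⟨fun k => if k = (0:ℤ) then Aset else if k = (-2:ℤ) then Bset else ∅, ?_, ?_, ?_⟩
  · intro k
    show MeasurableSet (if k = (0:ℤ) then Aset else if k = (-2:ℤ) then Bset else ∅)
    split_ifs
    · exact Aset_meas
    · exact Bset_meas
    · exact MeasurableSet.empty
  · exact pairPartition (by decide) AB_null (by simp)
  · have himg : (fun k : ℤ =>
        (fun p : ℝ × ℝ => ((2:ℝ)^k * p.1, (2:ℝ)^k * p.2)) ''
          (if k = (0:ℤ) then Aset else if k = (-2:ℤ) then Bset else ∅))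
        = (fun k : ℤ => if k = (0:ℤ) then Aset else if k = (-2:ℤ) then Xset else ∅) := by
      funext k
      by_cases h0 : k = (0:ℤ)
      · subst h0; simp only [if_pos rfl]; exact dil_img_zero
      · by_cases h1 : k = (-2:ℤ)
        · subst h1
          simp only [if_neg (show ¬(-2 : ℤ) = (0:ℤ) by decide), if_pos rfl]
          exact dil_img_B
        · simp only [if_neg h0, if_neg h1, image_empty]
    rw [himg]
    refine pairPartition (by decide) ?_ ?_
    · rw [AX_disj]; exact measure_empty
    · exact AX_union_vol

end Stmt19Aux

namespace Stmt19Aux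

lemma mem_scale4 (p : ℝ × ℝ) :
    p ∈ (fun p : ℝ × ℝ => (4 * p.1, 4 * p.2)) '' Tset' ↔ (p.1/4, p.2/4) ∈ Tset' := by
  constructor
  · rintro ⟨s, hs, rfl⟩
    have he : ((4 * s.1)/4, (4 * s.2)/4) = s :=
      Prod.ext (by show (4 * s.1)/4 = s.1; ring) (by show (4 * s.2)/4 = s.2; ring)
    show ((4 * s.1)/4, (4 * s.2)/4) ∈ Tset'
    rwa [he]
  · intro h
    exact ⟨(p.1/4, p.2/4), h, Prod.ext (by show 4*(p.1/4) = p.1; ring)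
      (by show 4*(p.2/4) = p.2; ring)⟩

lemma part2 : volume (Ttrans \ ((fun p : ℝ × ℝ => (4 * p.1, 4 * p.2)) '' Tset')) = 0 := by
  have hπ := Real.pi_pos
  refine measure_mono_null ?_ (singleton_null ((-(2*π) : ℝ), (2*π : ℝ)))
  rintro p ⟨hpt, hnot⟩
  rw [mem_Ttrans] at hpt
  obtain ⟨t1, t2, t3⟩ := hpt
  have hT : (p.1/4, p.2/4) ∈ Tset := ⟨by dsimp; linarith, by dsimp; linarith, by dsimp; linarith⟩
  have hinner : -(π/2) ≤ p.1/4 ∧ p.2/4 ≤ π/2 ∧ p.1/4 ≤ p.2/4 := by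
    by_contra hni
    exact hnot ((mem_scale4 p).2 ⟨hT, hni⟩)
  obtain ⟨i1, i2, i3⟩ := hinner
  simp only [mem_singleton_iff]
  exact Prod.ext (by show p.1 = -(2*π); linarith) (by show p.2 = 2*π; linarith)

lemma W_inter_swap_null {W₁ : Set (ℝ × ℝ)} (hsub : W₁ ⊆ Tset' ∪ Ttrans) :
    volume (W₁ ∩ Prod.swap ⁻¹' W₁) = 0 := by
  refine measure_mono_null ?_ diag_null
  rintro p ⟨hp1, hp2⟩
  have h1 := hsub hp1
  have h2 : Prod.swap p ∈ Tset' ∪ Ttrans := hsub hp2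
  have hπ := Real.pi_pos
  show p.1 = p.2
  rcases h1 with hA | hB <;> rcases h2 with hA' | hB'
  · have t1 := (Tsub hA).2.2
    have t2 := (Tsub hA').2.2
    simp only [Prod.fst_swap, Prod.snd_swap] at t2
    exact le_antisymm t1 t2
  · have t1 := (Tsub hA).2.2
    have t2 := Ttrans_bounds hB'
    simp only [Prod.fst_swap, Prod.snd_swap] at t2
    linarith [t2.1, t2.2]
  · have t1 := Ttrans_bounds hB
    have t2 := (Tsub hA').2.2
    simp only [Prod.fst_swap, Prod.snd_swap] at t2
    linarith [t1.1, t1.2]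
  · have t1 := Ttrans_bounds hB
    have t2 := Ttrans_bounds hB'
    simp only [Prod.fst_swap, Prod.snd_swap] at t2
    linarith [t1.1, t1.2, t2.1, t2.2]

end Stmt19Aux

open Stmt19Aux in
/-- Example 13 of the paper; the "pine tree" wavelet set.  Modulo
null sets, `T' ⊆ T`, `T + (−2π, 2π) ⊆ 4T'`, and `T' ∩ (T + (−2π, 2π))` is null; hence
there is a measurable `W₁ ⊆ T' ∪ (T + (−2π, 2π))` that is `2πℤ²`-translation
congruent to `T` and `2`-dilation congruent to `T'`; and for any such `W₁`, the set
`W₁ ∪ W₂`, with `W₂` the reflection of `W₁` in the line `y = x`, is a wavelet set in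
`ℝ²` for dilation `2I`. -/
theorem stmt_19 :
    volume (Tset' \ Tset) = 0 ∧
    volume (Ttrans \ ((fun p : ℝ × ℝ => (4 * p.1, 4 * p.2)) '' Tset')) = 0 ∧
    volume (Tset' ∩ Ttrans) = 0 ∧
    (∃ W₁ : Set (ℝ × ℝ), MeasurableSet W₁ ∧ W₁ ⊆ Tset' ∪ Ttrans ∧
      TransCongruent2 W₁ Tset ∧ DilCongruent2 W₁ Tset') ∧
    (∀ W₁ : Set (ℝ × ℝ), MeasurableSet W₁ → W₁ ⊆ Tset' ∪ Ttrans →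
      TransCongruent2 W₁ Tset → DilCongruent2 W₁ Tset' →
      IsWaveletSet2 (W₁ ∪ (fun p : ℝ × ℝ => (p.2, p.1)) '' W₁)) := by
  classical
  refine ⟨?_, ?_, ?_, ?_, ?_⟩
  · rw [Set.diff_eq_empty.2 Tsub]; exact measure_empty
  · exact part2
  · rw [T'_inter_Ttrans]; exact measure_empty
  · exact ⟨Aset ∪ Bset, Aset_meas.union Bset_meas,
      Set.union_subset_union Aset_sub Bset_sub, transCong, dilCong⟩
  · intro W₁ hW₁meas hWsub hTC hDC
    obtain ⟨P, hPmeas, hP1, hP2⟩ := hTC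
    obtain ⟨Q, hQmeas, hQ1, hQ2⟩ := hDC
    have himg : (fun p : ℝ × ℝ => (p.2, p.1)) '' W₁ = Prod.swap ⁻¹' W₁ := by
      rw [show (fun p : ℝ × ℝ => (p.2, p.1)) = Prod.swap from rfl,
        Set.image_swap_eq_preimage_swap]
    rw [himg]
    have hWnull : volume (W₁ ∩ Prod.swap ⁻¹' W₁) = 0 := W_inter_swap_null hWsub
    refine ⟨hW₁meas.union (hW₁meas.preimage measurable_swap), ?_, ?_⟩
    · -- translation tiling
      have hcongr : ∀ᵐ p : ℝ × ℝ, multFn aT W₁ p = multFn aT Tset p :=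
        mult_congr aT aT_add aT_zero aT_null hP1 hP2
      have hcongr_swap : ∀ᵐ p : ℝ × ℝ,
          multFn aT W₁ (Prod.swap p) = multFn aT Tset (Prod.swap p) := by
        rw [MeasureTheory.ae_iff] at hcongr ⊢
        exact swap_mp.quasiMeasurePreserving.preimage_null hcongr
      have hTsum : ∀ᵐ p : ℝ × ℝ,
          multFn aT Tset p + multFn aT (Prod.swap ⁻¹' Tset) p = 1 := by
        filter_upwards [sq_ae,
          ae_nmem aT_null (measure_mono_null T_inter_swap_sub diag_null)] with p hsq hdis
        rw [← multFn_union aT hdis, T_union_swap]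
        exact (tsum_indicator_eq_one_iff Sq (fun m => aT m p)).2 hsq
      filter_upwards [hcongr, hcongr_swap, hTsum, ae_nmem aT_null hWnull]
        with p h1 h2 h3 h4
      have hm : multFn aT (W₁ ∪ Prod.swap ⁻¹' W₁) p = 1 := by
        rw [multFn_union aT h4, h1, multFn_swap_aT W₁ p, h2, ← multFn_swap_aT Tset p]
        exact h3
      exact (tsum_indicator_eq_one_iff (W₁ ∪ Prod.swap ⁻¹' W₁) (fun m => aT m p)).1 hm
    · -- dilation tiling
      have hcongr : ∀ᵐ p : ℝ × ℝ, multFn aD W₁ p = multFn aD Tset' p :=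
        mult_congr aD aD_add aD_zero aD_null hQ1 hQ2
      have hcongr_swap : ∀ᵐ p : ℝ × ℝ,
          multFn aD W₁ (Prod.swap p) = multFn aD Tset' (Prod.swap p) := by
        rw [MeasureTheory.ae_iff] at hcongr ⊢
        exact swap_mp.quasiMeasurePreserving.preimage_null hcongr
      have hDsum : ∀ᵐ p : ℝ × ℝ,
          multFn aD Tset' p + multFn aD (Prod.swap ⁻¹' Tset') p = 1 := by
        have hdiag : ∀ᵐ p : ℝ × ℝ, p.1 ≠ p.2 := by
          rw [MeasureTheory.ae_iff]
          have he : {p : ℝ × ℝ | ¬ p.1 ≠ p.2} = {p : ℝ × ℝ | p.1 = p.2} := by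
            ext p; simp [not_not]
          rw [he]; exact diag_null
        filter_upwards [hdiag] with p hne
        rcases lt_or_gt_of_ne hne with h | h
        · have h1 : multFn aD Tset' p = 1 := by
            refine (tsum_indicator_eq_one_iff Tset' (fun k => aD k p)).2 ?_
            exact dil_unique h
          have h2 : multFn aD (Prod.swap ⁻¹' Tset') p = 0 := by
            unfold multFn
            rw [ENNReal.tsum_eq_zero]
            intro k
            refine Set.indicator_of_notMem ?_ _
            intro hc
            exact dil_none h k hc
          rw [h1, h2, add_zero]
        · have h1 : multFn aD Tset' p = 0 := by
            unfold multFn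
            rw [ENNReal.tsum_eq_zero]
            intro k
            refine Set.indicator_of_notMem ?_ _
            intro hc
            exact dil_none h k hc
          have h2 : multFn aD (Prod.swap ⁻¹' Tset') p = 1 := by
            refine (tsum_indicator_eq_one_iff (Prod.swap ⁻¹' Tset') (fun k => aD k p)).2 ?_
            exact dil_unique h
          rw [h1, h2, zero_add]
      filter_upwards [hcongr, hcongr_swap, hDsum, ae_nmem aD_null hWnull]
        with p h1 h2 h3 h4
      have hm : multFn aD (W₁ ∪ Prod.swap ⁻¹' W₁) p = 1 := by
        rw [multFn_union aD h4, h1, multFn_swap_aD W₁ p, h2, ← multFn_swap_aD Tset' p]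
        exact h3
      exact (tsum_indicator_eq_one_iff (W₁ ∪ Prod.swap ⁻¹' W₁) (fun k => aD k p)).1 hm
end
end
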